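/- arXiv:1512.04936 — 8 statements merged into one kernel-verified Lean document; each statement's English description precedes it below -/
import Mathlib

section
/- Let (X,d) be a metric space that has an accumulation point (i.e., there is a point x ∈ X such that every ball B_d(x,r) with r > 0 contains a point different from x). Then for every real number c with 0 < c < 1 there exists a distance d_c on X such that c·d(p,q) ≤ d_c(p,q) ≤ d(p,q) for all p,q ∈ X and such that the metric space (X,d_c) does not satisfy the Besicovitch Covering Property. -/
/-- The closed ball of center `p` and radius `r` for a distance-like function `d`. -/
def QBall {X : Type*} (d : X → X → ℝ) (p : X) (r : ℝ) : Set X := {q | d q p ≤ r}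

/-- A set is bounded if it is contained in some ball. -/
def QBounded {X : Type*} (d : X → X → ℝ) (A : Set X) : Prop :=
  ∃ p r, 0 < r ∧ A ⊆ QBall d p r

/-- The Besicovitch Covering Property: there is `N ≥ 1` such that for every bounded set `A`
and every family of balls with one ball `B(a, r a)` centered at each point `a ∈ A`, there is a
countable subfamily (given by a countable set of centers `F ⊆ A`) covering `A` with
multiplicity at most `N`. -/
def HasBCP {X : Type*} (d : X → X → ℝ) : Prop :=
  ∃ N : ℕ, 1 ≤ N ∧ ∀ (A : Set X) (r : X → ℝ), QBounded d A → (∀ a ∈ A, 0 < r a) →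
    ∃ F : Set X, F ⊆ A ∧ F.Countable ∧ (∀ a ∈ A, ∃ x ∈ F, a ∈ QBall d x (r x)) ∧
      ∀ y : X, ({x ∈ F | y ∈ QBall d x (r x)}).encard ≤ (N : ℕ∞)

/-- If `(X, dist)` is a metric space with an accumulation point, then for every `0 < c < 1`
there is a distance `dc` on `X` with `c · dist ≤ dc ≤ dist` for which BCP does not hold. -/
theorem statement0 {X : Type*} [MetricSpace X]
    (hacc : ∃ x : X, ∀ r : ℝ, 0 < r → ∃ y : X, y ≠ x ∧ dist y x ≤ r)
    (c : ℝ) (hc0 : 0 < c) (hc1 : c < 1) :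
    ∃ dc : X → X → ℝ,
      (∀ p q, 0 ≤ dc p q) ∧
      (∀ p q, dc p q = dc q p) ∧
      (∀ p q, dc p q = 0 ↔ p = q) ∧
      (∀ p p' q, dc p q ≤ dc p p' + dc p' q) ∧
      (∀ p q, c * dist p q ≤ dc p q ∧ dc p q ≤ dist p q) ∧
      ¬ HasBCP dc := by
  obtain ⟨x, hx⟩ := hacc
  choose gg hg1 hg2 using hx
  have hc1' : (0:ℝ) < 1 - c := by linarith
  set δ : ℝ := (1 - c) / 2 with hδdef
  have hδ0 : 0 < δ := by positivity
  have hδc : δ < 1 - c := by rw [hδdef]; linarith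
  have hδh : δ ≤ 1 / 2 := by rw [hδdef]; linarith
  -- construct a fast-decreasing sequence approaching x
  obtain ⟨q, hqx, hq1, hqs⟩ :
      ∃ q : ℕ → X, (∀ n, q n ≠ x) ∧ dist (q 0) x ≤ 1 ∧
        ∀ n, dist (q (n + 1)) x ≤ δ * dist (q n) x := by
    have key : ∀ y : X, y ≠ x → 0 < δ * dist y x :=
      fun y hy => mul_pos hδ0 (dist_pos.2 hy)
    let Q : ℕ → {y : X // y ≠ x} := fun n =>
      Nat.rec ⟨gg 1 one_pos, hg1 1 one_pos⟩
        (fun _ prev => ⟨gg (δ * dist prev.1 x) (key prev.1 prev.2), hg1 _ _⟩) n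
    exact ⟨fun n => (Q n).1, fun n => (Q n).2, hg2 1 one_pos, fun n => hg2 _ _⟩
  have ht0 : ∀ n, 0 < dist (q n) x := fun n => dist_pos.2 (hqx n)
  have hmono : ∀ n m : ℕ, n ≤ m → dist (q m) x ≤ dist (q n) x := by
    intro n m h
    induction m, h using Nat.le_induction with
    | base => exact le_refl _
    | succ m hm ih =>
      have h1 := hqs m
      nlinarith [ht0 m]
  have hstep : ∀ n m : ℕ, n < m → dist (q m) x ≤ δ * dist (q n) x := by
    intro n m h
    calc dist (q m) x ≤ dist (q (n+1)) x := hmono _ _ h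
      _ ≤ δ * dist (q n) x := hqs n
  have hkey : ∀ n m : ℕ, n ≠ m → c * dist (q m) x < dist (q n) (q m) := by
    intro n m hnm
    have e1 : dist (q n) x - dist (q m) x ≤ dist (q n) (q m) :=
      le_trans (le_abs_self _) (abs_dist_sub_le _ _ _)
    have e2 : dist (q m) x - dist (q n) x ≤ dist (q n) (q m) := by
      have h := abs_dist_sub_le (q m) (q n) x
      rw [dist_comm (q m) (q n)] at h
      exact le_trans (le_abs_self _) h
    rcases lt_or_gt_of_ne hnm with h | h
    · -- n < m : dist (q m) x ≤ δ * dist (q n) x ≤ dist (q n) x / 2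
      have h3 := hstep n m h
      nlinarith [mul_nonneg (by linarith : (0:ℝ) ≤ 1/2 - δ) (ht0 n).le,
        mul_pos hc1' (ht0 m)]
    · -- m < n
      have h3 := hstep m n h
      nlinarith [mul_pos (by linarith : (0:ℝ) < 1 - c - δ) (ht0 m)]
  have hqinj : Function.Injective q := by
    intro a b hab
    by_contra h
    have hk := hkey a b h
    rw [hab, dist_self] at hk
    nlinarith [mul_pos hc0 (ht0 b)]
  -- the discounted distance-to-x function g
  obtain ⟨g, hglb, hgle, hgle2, hlip⟩ :
      ∃ g : X → ℝ, (∀ p, c * dist p x ≤ g p) ∧ (∀ p, g p ≤ dist p x) ∧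
        (∀ p n, g p ≤ dist p (q n) + c * dist (q n) x) ∧
        (∀ p z, g p ≤ dist p z + g z) := by
    set S : X → Set ℝ := fun p =>
      insert (dist p x) (Set.range fun n => dist p (q n) + c * dist (q n) x) with hS
    have hSne : ∀ p, (S p).Nonempty := fun p => ⟨_, Set.mem_insert _ _⟩
    have hSlb : ∀ p, ∀ v ∈ S p, c * dist p x ≤ v := by
      intro p v hv
      simp only [hS, Set.mem_insert_iff, Set.mem_range] at hv
      rcases hv with rfl | ⟨n, rfl⟩
      · have hd : (0:ℝ) ≤ dist p x := dist_nonneg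
        nlinarith
      · have h := dist_triangle p (q n) x
        have hd : (0:ℝ) ≤ dist p (q n) := dist_nonneg
        nlinarith
    have hle1 : ∀ p, sInf (S p) ≤ dist p x :=
      fun p => csInf_le ⟨_, hSlb p⟩ (Set.mem_insert _ _)
    have hle2 : ∀ p n, sInf (S p) ≤ dist p (q n) + c * dist (q n) x :=
      fun p n => csInf_le ⟨_, hSlb p⟩ (Set.mem_insert_of_mem _ ⟨n, rfl⟩)
    refine ⟨fun p => sInf (S p), fun p => le_csInf (hSne p) (hSlb p), hle1, hle2, ?_⟩
    intro p z
    have h : sInf (S p) - dist p z ≤ sInf (S z) := by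
      apply le_csInf (hSne z)
      intro v hv
      simp only [hS, Set.mem_insert_iff, Set.mem_range] at hv
      rcases hv with rfl | ⟨n, rfl⟩
      · have h1 := dist_triangle p z x
        have h2 := hle1 p
        linarith
      · have h1 := dist_triangle p z (q n)
        have h2 := hle2 p n
        linarith
    linarith
  have hg0 : ∀ p, 0 ≤ g p := by
    intro p
    have := hglb p
    have hd : (0:ℝ) ≤ dist p x := dist_nonneg
    nlinarith
  have hgx : g x = 0 := le_antisymm (by simpa using hgle x) (hg0 x)
  have hgq : ∀ m, g (q m) ≤ c * dist (q m) x := by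
    intro m; simpa using hgle2 (q m) m
  -- the distance dc
  set dc : X → X → ℝ := fun p r => min (dist p r) (g p + g r) with hdc
  have hdc_le : ∀ p r, dc p r ≤ dist p r := fun p r => min_le_left _ _
  have hdc_le2 : ∀ p r, dc p r ≤ g p + g r := fun p r => min_le_right _ _
  have hdclb : ∀ p r, c * dist p r ≤ dc p r := by
    intro p r
    rw [hdc]
    apply le_min
    · have hd : (0:ℝ) ≤ dist p r := dist_nonneg
      nlinarith
    · have h2' : c * dist x r ≤ g r := by rw [dist_comm x r]; exact hglb r
      have h3 := dist_triangle p x r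
      have h4 := mul_le_mul_of_nonneg_left h3 hc0.le
      have h1 := hglb p
      linarith [mul_add c (dist p x) (dist x r)]
  have hdcsymm : ∀ p r, dc p r = dc r p := by
    intro p r
    rw [hdc]
    simp only
    rw [dist_comm, add_comm]
  have hdcql : ∀ m, dc (q m) x ≤ c * dist (q m) x := by
    intro m
    calc dc (q m) x ≤ g (q m) + g x := hdc_le2 _ _
      _ = g (q m) := by rw [hgx, add_zero]
      _ ≤ c * dist (q m) x := hgq m
  have hdcpos : ∀ p r, p ≠ r → 0 < dc p r := by
    intro p r hpr
    exact lt_of_lt_of_le (mul_pos hc0 (dist_pos.2 hpr)) (hdclb p r)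
  -- the key separation inequality
  have hball : ∀ n m : ℕ, dc (q n) (q m) ≤ dc (q m) x → n = m := by
    intro n m hle
    by_contra hnm
    have h1 := hdcql m
    have h2 : c * dist (q m) x < dc (q n) (q m) := by
      rw [hdc]
      apply lt_min
      · exact hkey n m hnm
      · have h3 : 0 < g (q n) := lt_of_lt_of_le (mul_pos hc0 (ht0 n)) (hglb (q n))
        have h4 : c * dist (q m) x ≤ g (q m) := hglb (q m)
        linarith
    linarith
  refine ⟨dc, ?_, hdcsymm, ?_, ?_, fun p r => ⟨hdclb p r, hdc_le p r⟩, ?_⟩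
  · -- nonneg
    intro p r
    rw [hdc]
    exact le_min dist_nonneg (add_nonneg (hg0 p) (hg0 r))
  · -- zero iff eq
    intro p r
    constructor
    · intro h
      by_contra hpr
      exact absurd h (ne_of_gt (hdcpos p r hpr))
    · rintro rfl
      rw [hdc]
      simp only [dist_self]
      exact min_eq_left (add_nonneg (hg0 p) (hg0 p))
  · -- triangle inequality
    intro p z r
    have m1 : dc p r ≤ dist p r := hdc_le p r
    have m2 : dc p r ≤ g p + g r := hdc_le2 p r
    have A := dist_triangle p z r
    have L1 := hlip p z
    have L2 : g r ≤ dist z r + g z := by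
      have h := hlip r z
      rwa [dist_comm r z] at h
    have hz := hg0 z
    have e1 : dc p z = min (dist p z) (g p + g z) := by rw [hdc]
    have e2 : dc z r = min (dist z r) (g z + g r) := by rw [hdc]
    rcases min_cases (dist p z) (g p + g z) with ⟨h1, _⟩ | ⟨h1, _⟩ <;>
      rcases min_cases (dist z r) (g z + g r) with ⟨h2, _⟩ | ⟨h2, _⟩ <;>
      rw [e1, e2, h1, h2] <;> linarith
  · -- ¬ HasBCP
    rintro ⟨N, hN1, hN⟩
    obtain ⟨F, hFA, hFc, hFcov, hFm⟩ := hN (Set.range q) (fun a => dc a x)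
      ⟨x, 1, one_pos, by
        rintro a ⟨n, rfl⟩
        show dc (q n) x ≤ 1
        calc dc (q n) x ≤ dist (q n) x := hdc_le _ _
          _ ≤ dist (q 0) x := hmono 0 n (Nat.zero_le n)
          _ ≤ 1 := hq1⟩
      (by rintro a ⟨n, rfl⟩; exact hdcpos (q n) x (hqx n))
    have hsub : Set.range q ⊆ F := by
      rintro _ ⟨n, rfl⟩
      obtain ⟨y, hyF, hy⟩ := hFcov (q n) ⟨n, rfl⟩
      obtain ⟨m, rfl⟩ := hFA hyF
      simp only [QBall, Set.mem_setOf_eq] at hy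
      rw [hball n m hy]
      exact hyF
    have hmem : Set.range q ⊆ {z ∈ F | x ∈ QBall dc z ((fun a => dc a x) z)} := by
      rintro _ ⟨n, rfl⟩
      refine ⟨hsub ⟨n, rfl⟩, ?_⟩
      simp only [QBall, Set.mem_setOf_eq]
      rw [hdcsymm]
    have hinf : ({z ∈ F | x ∈ QBall dc z ((fun a => dc a x) z)}).Infinite :=
      (Set.infinite_range_of_injective hqinj).mono hmem
    have hle := hFm x
    rw [Set.Infinite.encard_eq hinf] at hle
    simp at hle
end

section
/- Let (X,d) be a doubling quasi-metric space. Then (X,d) satisfies the Besicovitch Covering Property if and only if (X,d) satisfies the Weak Besicovitch Covering Property. -/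
/-- A quasi-distance: symmetric, vanishing exactly on the diagonal, nonnegative, and
satisfying a quasi-triangle inequality with multiplicative constant `C ≥ 1`. -/
def IsQuasiDist {X : Type*} (d : X → X → ℝ) : Prop :=
  (∀ p q, 0 ≤ d p q) ∧ (∀ p q, d p q = d q p) ∧ (∀ p q, d p q = 0 ↔ p = q) ∧
    ∃ C : ℝ, 1 ≤ C ∧ ∀ p p' q, d p q ≤ C * (d p p' + d p' q)

/-- `(X,d)` is doubling: there is `C ≥ 1` such that every ball of radius `2r` can be
covered by at most `C` balls of radius `r`. -/
def IsDoubling {X : Type*} (d : X → X → ℝ) : Prop :=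
  ∃ C : ℕ, 1 ≤ C ∧ ∀ (p : X) (r : ℝ), 0 < r →
    ∃ t : Finset X, t.card ≤ C ∧ QBall d p (2 * r) ⊆ ⋃ x ∈ t, QBall d x r

/-- A family of Besicovitch balls: a finite family of balls `B(x, r x)`, `x ∈ s`, such that
no center belongs to the ball of another center, with nonvoid common intersection. -/
def IsBesicovitchFamily {X : Type*} (d : X → X → ℝ) (s : Finset X) (r : X → ℝ) : Prop :=
  (∀ x ∈ s, 0 < r x) ∧ (∀ x ∈ s, ∀ y ∈ s, x ≠ y → x ∉ QBall d y (r y)) ∧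
    ∃ z, ∀ x ∈ s, z ∈ QBall d x (r x)

/-- The Weak Besicovitch Covering Property. -/
def HasWBCP {X : Type*} (d : X → X → ℝ) : Prop :=
  ∃ Q : ℕ, 1 ≤ Q ∧ ∀ (s : Finset X) (r : X → ℝ), IsBesicovitchFamily d s r → s.card ≤ Q


lemma mem_QBall {X : Type*} {d : X → X → ℝ} {p q : X} {r : ℝ} :
    q ∈ QBall d p r ↔ d q p ≤ r := Iff.rfl

section Aux
variable {X : Type*} {d : X → X → ℝ} {D₀ : ℕ}

lemma cover_pow
    (hdoub : ∀ (p : X) (r : ℝ), 0 < r →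
      ∃ t : Finset X, t.card ≤ D₀ ∧ QBall d p (2 * r) ⊆ ⋃ x ∈ t, QBall d x r)
    (j : ℕ) (p : X) (r : ℝ) (hr : 0 < r) :
    ∃ t : Finset X, t.card ≤ D₀ ^ j ∧ QBall d p (2 ^ j * r) ⊆ ⋃ x ∈ t, QBall d x r := by
  classical
  induction j generalizing p with
  | zero =>
    refine ⟨{p}, by simp, ?_⟩
    intro q hq
    simp only [Finset.mem_singleton, Set.mem_iUnion]
    exact ⟨p, rfl, by simpa using hq⟩
  | succ j ih =>
    obtain ⟨t₁, ht₁c, ht₁⟩ := hdoub p (2 ^ j * r) (by positivity)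
    choose f hf1 hf2 using fun x : X => ih x
    refine ⟨t₁.biUnion f, ?_, ?_⟩
    · calc (t₁.biUnion f).card ≤ ∑ x ∈ t₁, (f x).card := Finset.card_biUnion_le
        _ ≤ ∑ _x ∈ t₁, D₀ ^ j := Finset.sum_le_sum fun x _ => hf1 x
        _ = t₁.card * D₀ ^ j := by rw [Finset.sum_const, smul_eq_mul]
        _ ≤ D₀ * D₀ ^ j := Nat.mul_le_mul_right _ ht₁c
        _ = D₀ ^ (j + 1) := (pow_succ' _ _).symm
    · intro q hq
      have hq' : q ∈ QBall d p (2 * (2 ^ j * r)) := by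
        have he : (2 : ℝ) ^ (j + 1) * r = 2 * (2 ^ j * r) := by ring
        rwa [mem_QBall, he] at hq
      obtain ⟨x, hx, hqx⟩ := by simpa using ht₁ hq'
      obtain ⟨c, hc, hqc⟩ := by simpa using hf2 x (mem_QBall.2 hqx)
      simp only [Set.mem_iUnion, Finset.mem_biUnion]
      exact ⟨c, ⟨x, hx, hc⟩, hqc⟩

lemma sep_card {C : ℝ} (hC : 0 ≤ C) (hsymm : ∀ p q, d p q = d q p)
    (htri : ∀ p p' q, d p q ≤ C * (d p p' + d p' q))
    (hdoub : ∀ (p : X) (r : ℝ), 0 < r →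
      ∃ t : Finset X, t.card ≤ D₀ ∧ QBall d p (2 * r) ⊆ ⋃ x ∈ t, QBall d x r)
    (j : ℕ) (p : X) (ρ : ℝ) (hρ : 0 < ρ) (t : Finset X)
    (hmem : ∀ x ∈ t, d x p ≤ 2 ^ j * ρ)
    (hsep : ∀ x ∈ t, ∀ x' ∈ t, x ≠ x' → 2 * C * ρ < d x x') :
    t.card ≤ D₀ ^ j := by
  classical
  obtain ⟨s, hsc, hscov⟩ := cover_pow hdoub j p ρ hρ
  have hx : ∀ x ∈ t, ∃ c ∈ s, d x c ≤ ρ := by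
    intro x hx
    have := hscov (hmem x hx)
    simpa [mem_QBall] using this
  choose g hg1 hg2 using hx
  have : t.card ≤ s.card := by
    refine Finset.card_le_card_of_injOn (fun x => if h : x ∈ t then g x h else p) ?_ ?_
    · intro a ha; simp only [Finset.mem_coe] at ha; simp [ha, hg1 a ha]
    · intro a ha b hb hab
      simp only [Finset.mem_coe] at ha hb
      simp only [dif_pos ha, dif_pos hb] at hab
      by_contra hne
      have h1 : d a b ≤ C * (d a (g a ha) + d (g a ha) b) := htri _ _ _
      have h2 : d (g a ha) b = d b (g b hb) := by rw [hsymm]; rw [hab]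
      have := hsep a ha b hb hne
      have h3 := hg2 a ha
      have h4 := hg2 b hb
      nlinarith [this, hC]
  exact this.trans hsc

end Aux

section Greedy
variable {X : Type*}

/-- The predicate for a "good next choice" in greedy selection. -/
def GoodChoice (d : X → X → ℝ) (A : Set X) (r : X → ℝ) (s : Set X) (a : X) : Prop :=
  a ∈ A ∧ (∀ x ∈ s, r x < d a x) ∧ ∀ b ∈ A, (∀ x ∈ s, r x < d b x) → r b ≤ 2 * r a

open Classical in
noncomputable def greedyStep (d : X → X → ℝ) (A : Set X) (r : X → ℝ) (s : Set X) : Set X :=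
  if h : ∃ a, GoodChoice d A r s a then insert h.choose s else s

noncomputable def greedySets (d : X → X → ℝ) (A : Set X) (r : X → ℝ) : ℕ → Set X
  | 0 => ∅
  | n + 1 => greedyStep d A r (greedySets d A r n)

variable {d : X → X → ℝ} {A : Set X} {r : X → ℝ}

lemma subset_greedyStep (s : Set X) : s ⊆ greedyStep d A r s := by
  unfold greedyStep; split <;> simp [Set.subset_insert]

lemma greedySets_mono : Monotone (greedySets d A r) :=
  monotone_nat_of_le_succ fun n => subset_greedyStep _

lemma greedySets_finite (n : ℕ) : (greedySets d A r n).Finite := by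
  induction n with
  | zero => simp [greedySets]
  | succ n ih =>
    show (greedyStep d A r _).Finite
    unfold greedyStep; split
    · exact ih.insert _
    · exact ih

/-- The invariant maintained by the greedy process. -/
def GreedyInv (d : X → X → ℝ) (A : Set X) (r : X → ℝ) (s : Set X) : Prop :=
  s ⊆ A ∧
  (∀ x ∈ s, ∀ y ∈ s, x ≠ y →
    (r y ≤ 2 * r x ∧ r x < d x y) ∨ (r x ≤ 2 * r y ∧ r y < d x y)) ∧
  (∀ x ∈ s, ∀ b ∈ A, (∀ z ∈ s, r z < d b z) → r b ≤ 2 * r x)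

lemma greedyInv_step (hsymm : ∀ p q, d p q = d q p) (s : Set X) (hs : GreedyInv d A r s) :
    GreedyInv d A r (greedyStep d A r s) := by
  classical
  unfold greedyStep
  split
  case isFalse => exact hs
  case isTrue h =>
    obtain ⟨haA, hunc, hmax⟩ := h.choose_spec
    set a := h.choose with ha
    obtain ⟨hsA, hpair, hthird⟩ := hs
    have key : ∀ x ∈ s, r a ≤ 2 * r x ∧ r x < d x a := fun x hx =>
      ⟨hthird x hx a haA hunc, by rw [hsymm]; exact hunc x hx⟩
    refine ⟨?_, ?_, ?_⟩
    · exact Set.insert_subset haA hsA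
    · rintro x (rfl | hx) y (rfl | hy) hne
      · exact absurd rfl hne
      · right
        obtain ⟨h1, h2⟩ := key y hy
        exact ⟨h1, by rwa [hsymm]⟩
      · left; exact key x hx
      · exact hpair x hx y hy hne
    · rintro x (rfl | hx) b hb hub
      · exact hmax b hb fun z hz => hub z (Set.mem_insert_of_mem _ hz)
      · exact hthird x hx b hb fun z hz => hub z (Set.mem_insert_of_mem _ hz)

lemma greedyInv_sets (hsymm : ∀ p q, d p q = d q p) (n : ℕ) :
    GreedyInv d A r (greedySets d A r n) := by
  induction n with
  | zero => refine ⟨by simp [greedySets], by simp [greedySets], by simp [greedySets]⟩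
  | succ n ih => exact greedyInv_step hsymm _ ih

/-- Existence of a good choice when there is an uncovered point and radii are bounded. -/
lemma goodChoice_exists {Rmax : ℝ} (hr : ∀ a ∈ A, 0 < r a) (hrmax : ∀ a ∈ A, r a ≤ Rmax)
    (s : Set X) (a₀ : X) (ha₀ : a₀ ∈ A) (hunc : ∀ x ∈ s, r x < d a₀ x) :
    ∃ a, GoodChoice d A r s a := by
  set U : Set X := {b | b ∈ A ∧ ∀ x ∈ s, r x < d b x} with hU
  have hUne : U.Nonempty := ⟨a₀, ha₀, hunc⟩
  have hbdd : BddAbove (r '' U) := ⟨Rmax, by rintro _ ⟨b, hb, rfl⟩; exact hrmax b hb.1⟩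
  set σ := sSup (r '' U) with hσ
  have hσpos : 0 < σ := lt_of_lt_of_le (hr a₀ ha₀) (le_csSup hbdd ⟨a₀, ⟨ha₀, hunc⟩, rfl⟩)
  obtain ⟨v, ⟨a, haU, rfl⟩, hlt⟩ :=
    exists_lt_of_lt_csSup (hUne.image r) (half_lt_self hσpos)
  refine ⟨a, haU.1, haU.2, fun b hb hub => ?_⟩
  have : r b ≤ σ := le_csSup hbdd ⟨b, ⟨hb, hub⟩, rfl⟩
  linarith

lemma greedy_main (hsymm : ∀ p q, d p q = d q p) {Rmax : ℝ}
    (hr : ∀ a ∈ A, 0 < r a) (hrmax : ∀ a ∈ A, r a ≤ Rmax)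
    (hfin : ∀ ε : ℝ, 0 < ε → ∀ g : ℕ → X, (∀ n, g n ∈ A) →
      (∀ m n, m < n → ε < d (g n) (g m)) → False) :
    ∃ F : Set X, F ⊆ A ∧ F.Countable ∧ (∀ a ∈ A, ∃ x ∈ F, d a x ≤ r x) ∧
      ∀ x ∈ F, ∀ y ∈ F, x ≠ y →
        (r y ≤ 2 * r x ∧ r x < d x y) ∨ (r x ≤ 2 * r y ∧ r y < d x y) := by
  classical
  set F : Set X := ⋃ n, greedySets d A r n with hF
  have hsub : ∀ n, greedySets d A r n ⊆ F := fun n => Set.subset_iUnion _ n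
  have hFA : F ⊆ A := Set.iUnion_subset fun n => (greedyInv_sets hsymm n).1
  refine ⟨F, hFA, Set.countable_iUnion fun n => (greedySets_finite n).countable, ?_, ?_⟩
  · -- covering
    intro a ha
    by_contra hcon
    push_neg at hcon
    have hunc : ∀ x ∈ F, r x < d a x := hcon
    have hex : ∀ n : ℕ, ∃ b, GoodChoice d A r (greedySets d A r n) b := fun n =>
      goodChoice_exists hr hrmax _ a ha fun x hx => hunc x (hsub n hx)
    set g : ℕ → X := fun n => (hex n).choose with hg
    have hstep : ∀ n, greedySets d A r (n + 1) = insert (g n) (greedySets d A r n) := by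
      intro n
      show greedyStep d A r _ = _
      unfold greedyStep
      rw [dif_pos (hex n)]
    have hgspec : ∀ n, GoodChoice d A r (greedySets d A r n) (g n) := fun n => (hex n).choose_spec
    have hgmem : ∀ n, g n ∈ greedySets d A r (n + 1) := fun n => by
      rw [hstep n]; exact Set.mem_insert _ _
    have hsep : ∀ m n, m < n → r a / 2 < d (g n) (g m) := by
      intro m n hmn
      have h1 : g m ∈ greedySets d A r n := greedySets_mono hmn (hgmem m)
      have h2 : r (g m) < d (g n) (g m) := (hgspec n).2.1 _ h1
      have h3 : r a ≤ 2 * r (g m) :=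
        (hgspec m).2.2 a ha fun z hz => hunc z (hsub m hz)
      linarith
    exact hfin (r a / 2) (by linarith [hr a ha]) g (fun n => (hgspec n).1) hsep
  · -- pairwise
    intro x hx y hy hne
    obtain ⟨m, hm⟩ := Set.mem_iUnion.1 hx
    obtain ⟨n, hn⟩ := Set.mem_iUnion.1 hy
    have hx' : x ∈ greedySets d A r (max m n) := greedySets_mono (le_max_left m n) hm
    have hy' : y ∈ greedySets d A r (max m n) := greedySets_mono (le_max_right m n) hn
    exact (greedyInv_sets hsymm (max m n)).2.1 x hx' y hy' hne

end Greedy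
section Overlap
variable {X : Type*} {d : X → X → ℝ} {D₀ : ℕ} {C : ℝ}

lemma overlap_bound (hC : 1 ≤ C) (hsymm : ∀ p q, d p q = d q p)
    (htri : ∀ p p' q, d p q ≤ C * (d p p' + d p' q))
    (hdoub : ∀ (p : X) (r : ℝ), 0 < r →
      ∃ t : Finset X, t.card ≤ D₀ ∧ QBall d p (2 * r) ⊆ ⋃ x ∈ t, QBall d x r)
    {Q j₀ : ℕ} (hwbcp : ∀ (s : Finset X) (r : X → ℝ), IsBesicovitchFamily d s r → s.card ≤ Q)
    (hj₀ : 4 * C ≤ 2 ^ j₀)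
    {A F : Set X} {r : X → ℝ} (hFA : F ⊆ A) (hr : ∀ a ∈ A, 0 < r a)
    (hpair : ∀ x ∈ F, ∀ y ∈ F, x ≠ y →
      (r y ≤ 2 * r x ∧ r x < d x y) ∨ (r x ≤ 2 * r y ∧ r y < d x y))
    (y : X) (u : Finset X) (hu : ∀ x ∈ u, x ∈ F ∧ d y x ≤ r x) :
    u.card ≤ D₀ ^ j₀ * (Q * 3) := by
  classical
  have hC0 : (0:ℝ) < C := lt_of_lt_of_le one_pos hC
  set k : X → ℤ := fun x => Int.log 2 (r x) with hk
  have hrpos : ∀ x ∈ u, 0 < r x := fun x hx => hr x (hFA (hu x hx).1)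
  have hk1 : ∀ x ∈ u, (2:ℝ) ^ (k x) ≤ r x := by
    intro x hx
    have := Int.zpow_log_le_self (b := 2) (by norm_num) (hrpos x hx)
    simpa using this
  have hk2 : ∀ x ∈ u, r x < (2:ℝ) ^ (k x + 1) := by
    intro x hx
    have := Int.lt_zpow_succ_log_self (b := 2) (by norm_num) (r x)
    simpa using this
  -- step 1 : each scale-fiber has at most D₀ ^ j₀ elements
  have step1 : ∀ j ∈ u.image k, (u.filter (fun x => k x = j)).card ≤ D₀ ^ j₀ := by
    intro j _
    set ρ : ℝ := (2:ℝ) ^ (j + 1) / 2 ^ j₀ with hρdef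
    have hρ : 0 < ρ := by positivity
    refine sep_card (le_of_lt hC0) hsymm htri hdoub j₀ y ρ hρ _ ?_ ?_
    · intro x hx
      rw [Finset.mem_filter] at hx
      obtain ⟨hxu, hxk⟩ := hx
      have h1 : d x y ≤ r x := by rw [hsymm]; exact (hu x hxu).2
      have h2 : r x < (2:ℝ) ^ (j + 1) := hxk ▸ hk2 x hxu
      have h3 : (2:ℝ) ^ j₀ * ρ = (2:ℝ) ^ (j + 1) := by
        rw [hρdef, mul_div_cancel₀ _ (by positivity : ((2:ℝ) ^ j₀) ≠ 0)]
      rw [h3]; linarith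
    · intro x hx x' hx' hne
      rw [Finset.mem_filter] at hx hx'
      obtain ⟨hxu, hxk⟩ := hx
      obtain ⟨hx'u, hx'k⟩ := hx'
      have hdxx : (2:ℝ) ^ j < d x x' := by
        rcases hpair x (hu x hxu).1 x' (hu x' hx'u).1 hne with ⟨_, h⟩ | ⟨_, h⟩
        · exact lt_of_le_of_lt (hxk ▸ hk1 x hxu) h
        · exact lt_of_le_of_lt (hx'k ▸ hk1 x' hx'u) h
      have key : 2 * C * ρ ≤ (2:ℝ) ^ j := by
        rw [hρdef, ← mul_div_assoc, div_le_iff₀ (by positivity)]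
        have e1 : (2:ℝ) ^ (j + 1) = 2 * 2 ^ j := by
          rw [zpow_add_one₀ (two_ne_zero)]; ring
        have h2j : (0:ℝ) < 2 ^ j := by positivity
        calc 2 * C * (2 ^ (j+1)) = (4 * C) * 2 ^ j := by rw [e1]; ring
          _ ≤ 2 ^ j₀ * 2 ^ j := by
              apply mul_le_mul_of_nonneg_right hj₀ (le_of_lt h2j)
          _ = 2 ^ j * 2 ^ j₀ := by ring
      exact lt_of_le_of_lt key hdxx
  -- representatives of scales
  have hrepex : ∀ j ∈ u.image k, ∃ x ∈ u, k x = j := by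
    intro j hj; simpa using Finset.mem_image.1 hj
  set rep : ℤ → X := fun j => if h : ∃ x ∈ u, k x = j then h.choose else y with hrep
  have hrepmem : ∀ j ∈ u.image k, rep j ∈ u ∧ k (rep j) = j := by
    intro j hj
    obtain ⟨x, hx, hkx⟩ := hrepex j hj
    have hex : ∃ x ∈ u, k x = j := ⟨x, hx, hkx⟩
    simp only [hrep, dif_pos hex]
    exact ⟨hex.choose_spec.1, hex.choose_spec.2⟩
  -- mutual exclusion across far scales
  have far : ∀ x ∈ u, ∀ x' ∈ u, k x + 3 ≤ k x' → r x < d x x' ∧ r x' < d x x' := by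
    intro x hxu x' hx'u hkk
    have h1 : r x < (2:ℝ) ^ (k x + 1) := hk2 x hxu
    have h2 : (2:ℝ) ^ (k x') ≤ r x' := hk1 x' hx'u
    have hp : (0:ℝ) < 2 ^ (k x + 1) := by positivity
    have h3 : (2:ℝ) ^ (k x + 1) * 4 ≤ (2:ℝ) ^ (k x') := by
      have e1 : (2:ℝ) ^ (k x + 3) = (2:ℝ) ^ (k x + 1) * (2:ℝ) ^ (2:ℤ) := by
        rw [← zpow_add₀ (two_ne_zero : (2:ℝ) ≠ 0)]; ring_nf
      have e2 : ((2:ℝ)) ^ (2:ℤ) = 4 := by norm_num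
      have e3 : (2:ℝ) ^ (k x + 3) ≤ (2:ℝ) ^ (k x') :=
        zpow_le_zpow_right₀ (by norm_num) hkk
      rw [e1, e2] at e3; exact e3
    have hne : x ≠ x' := by rintro rfl; omega
    have h4 : ¬ (r x' ≤ 2 * r x) := by intro h; linarith
    rcases hpair x (hu x hxu).1 x' (hu x' hx'u).1 hne with ⟨h5, _⟩ | ⟨_, h6⟩
    · exact absurd h5 h4
    · exact ⟨by linarith, h6⟩
  -- step 2 : each residue class of scales has at most Q elements
  have step2 : ∀ rbar ∈ (u.image k).image (· % 3),
      ((u.image k).filter (fun j => j % 3 = rbar)).card ≤ Q := by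
    intro rbar _
    set φ := (u.image k).filter (fun j => j % 3 = rbar) with hφ
    have hφsub : φ ⊆ u.image k := Finset.filter_subset _ _
    have hinj : Set.InjOn rep ↑φ := by
      intro a ha b hb hab
      have h1 := (hrepmem a (hφsub ha)).2
      have h2 := (hrepmem b (hφsub hb)).2
      rw [← h1, ← h2, hab]
    have hcard : (φ.image rep).card = φ.card := Finset.card_image_of_injOn hinj
    have hbes : IsBesicovitchFamily d (φ.image rep) r := by
      refine ⟨?_, ?_, ⟨y, ?_⟩⟩
      · intro x hx
        obtain ⟨j, hj, rfl⟩ := Finset.mem_image.1 hx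
        exact hrpos _ (hrepmem j (hφsub hj)).1
      · intro x hx x' hx' hne
        obtain ⟨j, hj, rfl⟩ := Finset.mem_image.1 hx
        obtain ⟨j', hj', rfl⟩ := Finset.mem_image.1 hx'
        have hju := hrepmem j (hφsub hj)
        have hj'u := hrepmem j' (hφsub hj')
        have hjne : j ≠ j' := fun h => hne (by rw [h])
        have hmod : j % 3 = j' % 3 := by
          have := (Finset.mem_filter.1 hj).2
          have := (Finset.mem_filter.1 hj').2
          omega
        rw [mem_QBall, not_le]
        rcases lt_or_gt_of_ne hjne with hlt | hlt
        · -- j < j', so k (rep j) + 3 ≤ k (rep j')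
          have hk3 : k (rep j) + 3 ≤ k (rep j') := by rw [hju.2, hj'u.2]; omega
          exact (far _ hju.1 _ hj'u.1 hk3).2
        · have hk3 : k (rep j') + 3 ≤ k (rep j) := by rw [hju.2, hj'u.2]; omega
          have := (far _ hj'u.1 _ hju.1 hk3).1
          rwa [hsymm] at this
      · intro x hx
        obtain ⟨j, hj, rfl⟩ := Finset.mem_image.1 hx
        exact (hu _ (hrepmem j (hφsub hj)).1).2
    have := hwbcp (φ.image rep) r hbes
    omega
  -- assemble
  have h2 : (u.image k).card ≤ Q * ((u.image k).image (· % 3)).card :=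
    Finset.card_le_mul_card_image _ _ step2
  have h3 : ((u.image k).image (· % 3)).card ≤ 3 := by
    have hsub : (u.image k).image (· % 3) ⊆ ({0, 1, 2} : Finset ℤ) := by
      intro j hj
      obtain ⟨i, _, rfl⟩ := Finset.mem_image.1 hj
      have h0 : 0 ≤ i % 3 := Int.emod_nonneg i (by norm_num)
      have h1 : i % 3 < 3 := Int.emod_lt_of_pos i (by norm_num)
      simp only [Finset.mem_insert, Finset.mem_singleton]
      omega
    calc ((u.image k).image (· % 3)).card ≤ ({0,1,2} : Finset ℤ).card :=
        Finset.card_le_card hsub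
      _ = 3 := by decide
  have h1 : u.card ≤ D₀ ^ j₀ * (u.image k).card :=
    Finset.card_le_mul_card_image _ _ step1
  calc u.card ≤ D₀ ^ j₀ * (u.image k).card := h1
    _ ≤ D₀ ^ j₀ * (Q * ((u.image k).image (· % 3)).card) := by
        exact Nat.mul_le_mul_left _ h2
    _ ≤ D₀ ^ j₀ * (Q * 3) := by
        exact Nat.mul_le_mul_left _ (Nat.mul_le_mul_left _ h3)

end Overlap

/-- A doubling quasi-metric space satisfies BCP if and only if it satisfies WBCP. -/
theorem statement1 {X : Type*} (d : X → X → ℝ)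
    (hd : IsQuasiDist d) (hdoub : IsDoubling d) :
    HasBCP d ↔ HasWBCP d := by
  classical
  obtain ⟨hpos, hsymm, hzero, C, hC1, htri⟩ := hd
  obtain ⟨D₀, hD₀1, hdoub⟩ := hdoub
  have hC0 : (0:ℝ) < C := lt_of_lt_of_le one_pos hC1
  constructor
  · -- BCP → WBCP
    rintro ⟨N, hN1, hbcp⟩
    refine ⟨N, hN1, ?_⟩
    rintro s r ⟨hrpos, hsep, z, hz⟩
    rcases s.eq_empty_or_nonempty with rfl | ⟨x₀, hx₀⟩
    · simp
    · have hbdd : QBounded d ↑s := by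
        refine ⟨x₀, (s.sup' ⟨x₀, hx₀⟩ fun x => d x x₀) + 1, ?_, ?_⟩
        · have h0 : (0:ℝ) ≤ s.sup' ⟨x₀, hx₀⟩ fun x => d x x₀ :=
            le_trans (le_of_eq ((hzero x₀ x₀).2 rfl).symm) (Finset.le_sup' (fun x => d x x₀) hx₀)
          linarith
        · intro a ha
          have : d a x₀ ≤ s.sup' ⟨x₀, hx₀⟩ fun x => d x x₀ :=
            Finset.le_sup' (fun x => d x x₀) (Finset.mem_coe.1 ha)
          show d a x₀ ≤ _
          linarith
      obtain ⟨F, hFs, _, hcov, hcount⟩ :=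
        hbcp ↑s r hbdd (fun a ha => hrpos a (by exact_mod_cast ha))
      have hFeq : F = ↑s := by
        refine subset_antisymm hFs ?_
        intro a ha
        have ha' : a ∈ s := by exact_mod_cast ha
        obtain ⟨x, hxF, hax⟩ := hcov a ha
        have hxs : x ∈ s := by exact_mod_cast hFs hxF
        rcases eq_or_ne a x with rfl | hne
        · exact hxF
        · exact absurd hax (hsep a ha' x hxs hne)
      have hset : {x ∈ F | z ∈ QBall d x (r x)} = ↑s := by
        rw [hFeq]
        ext x
        simp only [Set.mem_setOf_eq, Set.mem_sep_iff, Finset.mem_coe, and_iff_left_iff_imp]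
        intro hx
        exact hz x hx
      have := hcount z
      rw [hset, Set.encard_coe_eq_coe_finsetCard] at this
      exact_mod_cast this
  · -- WBCP → BCP
    rintro ⟨Q, hQ1, hwbcp⟩
    obtain ⟨j₀, hj₀⟩ := pow_unbounded_of_one_lt (4 * C) one_lt_two
    refine ⟨D₀ ^ j₀ * (Q * 3), ?_, ?_⟩
    · have h1 : 0 < D₀ ^ j₀ := Nat.pow_pos hD₀1
      have h2 : 0 < Q * 3 := by omega
      exact Nat.one_le_iff_ne_zero.2 (Nat.mul_ne_zero h1.ne' h2.ne')
    intro A r hbdd hrpos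
    obtain ⟨p₀, R₀, hR₀, hA⟩ := hbdd
    by_cases hbig : ∃ a ∈ A, 2 * C * R₀ ≤ r a
    · obtain ⟨a, haA, hra⟩ := hbig
      refine ⟨{a}, by simpa using haA, Set.countable_singleton a, ?_, ?_⟩
      · intro b hb
        refine ⟨a, Set.mem_singleton a, ?_⟩
        have h1 : d b p₀ ≤ R₀ := hA hb
        have h2 : d p₀ a ≤ R₀ := by rw [hsymm]; exact hA haA
        have h3 := htri b p₀ a
        show d b a ≤ r a
        nlinarith
      · intro y
        have hsub : {x ∈ ({a} : Set X) | y ∈ QBall d x (r x)} ⊆ {a} := Set.sep_subset _ _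
        calc ({x ∈ ({a} : Set X) | y ∈ QBall d x (r x)}).encard
            ≤ ({a} : Set X).encard := Set.encard_mono hsub
          _ = 1 := Set.encard_singleton a
          _ ≤ _ := by
              rw [← Nat.cast_one, Nat.cast_le]
              have h1 : 0 < D₀ ^ j₀ := Nat.pow_pos hD₀1
              have h2 : 0 < Q * 3 := by omega
              exact Nat.one_le_iff_ne_zero.2 (Nat.mul_ne_zero h1.ne' h2.ne')
    · push_neg at hbig
      have hfin : ∀ ε : ℝ, 0 < ε → ∀ g : ℕ → X, (∀ n, g n ∈ A) →
          (∀ m n, m < n → ε < d (g n) (g m)) → False := by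
        intro ε hε g hgA hgsep
        set ρ : ℝ := ε / (2 * C) with hρdef
        have hρ : 0 < ρ := by positivity
        obtain ⟨j, hj⟩ := pow_unbounded_of_one_lt (R₀ / ρ) one_lt_two
        have hR₀j : R₀ ≤ 2 ^ j * ρ := by
          rw [div_lt_iff₀ hρ] at hj; linarith
        have hginj : Function.Injective g := by
          intro m n hmn
          by_contra hne
          rcases lt_or_gt_of_ne hne with h | h
          · have h1 := hgsep m n h
            rw [hmn] at h1
            have h0 : d (g n) (g n) = 0 := (hzero _ _).2 rfl
            linarith
          · have h1 := hgsep n m h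
            rw [hmn] at h1
            have h0 : d (g n) (g n) = 0 := (hzero _ _).2 rfl
            linarith
        set t : Finset X := (Finset.range (D₀ ^ j + 1)).image g with ht
        have htcard : t.card = D₀ ^ j + 1 := by
          rw [ht, Finset.card_image_of_injective _ hginj, Finset.card_range]
        have heρ : 2 * C * ρ = ε := by
          rw [hρdef, mul_div_cancel₀ _ (by positivity : (2 : ℝ) * C ≠ 0)]
        have hcard := sep_card (le_of_lt hC0) hsymm htri hdoub j p₀ ρ hρ t
          (by
            intro x hx
            obtain ⟨i, _, rfl⟩ := Finset.mem_image.1 hx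
            exact le_trans (hA (hgA i)) hR₀j)
          (by
            intro x hx x' hx' hne
            obtain ⟨i, _, rfl⟩ := Finset.mem_image.1 hx
            obtain ⟨i', _, rfl⟩ := Finset.mem_image.1 hx'
            have hii : i ≠ i' := fun h => hne (by rw [h])
            rw [heρ]
            rcases lt_or_gt_of_ne hii with h | h
            · rw [hsymm]; exact hgsep i i' h
            · exact hgsep i' i h)
        omega
      obtain ⟨F, hFA, hFcount, hcov, hpair⟩ :=
        greedy_main (A := A) (r := r) hsymm (Rmax := 2 * C * R₀) hrpos
          (fun a ha => le_of_lt (hbig a ha)) hfin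
      refine ⟨F, hFA, hFcount, fun a ha => hcov a ha, ?_⟩
      intro y
      by_contra hcon
      rw [not_le] at hcon
      have h1 : ((D₀ ^ j₀ * (Q * 3) : ℕ) : ℕ∞) + 1 ≤ ({x ∈ F | y ∈ QBall d x (r x)}).encard :=
        (ENat.add_one_le_iff (ENat.coe_ne_top (D₀ ^ j₀ * (Q * 3)))).2 hcon
      have h2 : (((D₀ ^ j₀ * (Q * 3) + 1 : ℕ)) : ℕ∞) ≤ ({x ∈ F | y ∈ QBall d x (r x)}).encard := by
        push_cast
        exact h1
      obtain ⟨T, hTsub, hTcard⟩ := Set.exists_subset_encard_eq h2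
      have hTfin : T.Finite := Set.finite_of_encard_eq_coe hTcard
      have hucard : hTfin.toFinset.card = D₀ ^ j₀ * (Q * 3) + 1 := by
        have := hTfin.encard_eq_coe_toFinset_card
        rw [hTcard] at this
        exact_mod_cast this.symm
      have hu : ∀ x ∈ hTfin.toFinset, x ∈ F ∧ d y x ≤ r x := by
        intro x hx
        have : x ∈ T := hTfin.mem_toFinset.1 hx
        exact hTsub this
      have := overlap_bound hC1 hsymm htri hdoub hwbcp (le_of_lt hj₀) hFA hrpos hpair
        y hTfin.toFinset hu
      omega
end

section
/- Let (X,d_X) and (Y,d_Y) be metric spaces both satisfying the Weak Besicovitch Covering Property. Then the product X × Y equipped with the max distance d_{X×Y}((x,y),(x',y')) := max(d_X(x,x'), d_Y(y,y')) satisfies the Weak Besicovitch Covering Property. -/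
/-- A finite Ramsey-type bound: if every `R`-clique in `s` has size at most `a` and every
`Rᶜ`-clique has size at most `b`, then `s` has at most `(a+b).choose a - 1` elements. -/
private lemma ramsey_aux {α : Type*} [DecidableEq α] (R : α → α → Prop)
    [DecidableRel R] (hsymm : ∀ x y, R x y → R y x) :
    ∀ (n a b : ℕ) (s : Finset α), a + b ≤ n →
      (∀ t ⊆ s, (∀ x ∈ t, ∀ y ∈ t, x ≠ y → R x y) → t.card ≤ a) →
      (∀ t ⊆ s, (∀ x ∈ t, ∀ y ∈ t, x ≠ y → ¬ R x y) → t.card ≤ b) →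
      s.card ≤ (a + b).choose a - 1 := by
  have empty_of : ∀ (s : Finset α), (∀ t ⊆ s, (∀ x ∈ t, ∀ y ∈ t, x ≠ y → True) → t.card ≤ 0) → True := fun _ _ => trivial
  intro n
  induction n with
  | zero =>
    intro a b s hn hA hB
    obtain rfl : a = 0 := by omega
    obtain rfl : b = 0 := by omega
    -- a = b = 0 : s must be empty
    have hs : s = ∅ := by
      rw [Finset.eq_empty_iff_forall_notMem]
      intro x hx
      have := hA {x} (by simpa using hx) (by simp)
      simp at this
    simp [hs]
  | succ n ih =>
    intro a b s hn hA hB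
    match a, b with
    | 0, b =>
      have hs : s = ∅ := by
        rw [Finset.eq_empty_iff_forall_notMem]
        intro x hx
        have := hA {x} (by simpa using hx) (by simp)
        simp at this
      simp [hs]
    | a + 1, 0 =>
      have hs : s = ∅ := by
        rw [Finset.eq_empty_iff_forall_notMem]
        intro x hx
        have := hB {x} (by simpa using hx) (by simp)
        simp at this
      simp [hs]
    | a + 1, b + 1 =>
      rcases s.eq_empty_or_nonempty with hs | ⟨x, hx⟩
      · simp [hs]
      set A := (s.erase x).filter (fun y => R x y) with hAdef
      set B := (s.erase x).filter (fun y => ¬ R x y) with hBdef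
      have hAsub : A ⊆ s := (Finset.filter_subset _ _).trans (Finset.erase_subset _ _)
      have hBsub : B ⊆ s := (Finset.filter_subset _ _).trans (Finset.erase_subset _ _)
      have hcardA : A.card ≤ (a + (b + 1)).choose a - 1 := by
        refine ih a (b + 1) A (by omega) ?_ ?_
        · intro t ht hclique
          have hxt : x ∉ t := by
            intro hxt
            exact Finset.notMem_erase x s (Finset.mem_of_mem_filter x (ht hxt))
          have : (insert x t).card ≤ a + 1 := by
            refine hA (insert x t) ?_ ?_
            · intro y hy
              rcases Finset.mem_insert.1 hy with rfl | hy
              · exact hx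
              · exact hAsub (ht hy)
            · intro u hu v hv huv
              rcases Finset.mem_insert.1 hu with h1 | h1 <;>
                rcases Finset.mem_insert.1 hv with h2 | h2
              · exact absurd (h1.trans h2.symm) huv
              · subst h1; exact (Finset.mem_filter.1 (ht h2)).2
              · subst h2; exact hsymm _ _ (Finset.mem_filter.1 (ht h1)).2
              · exact hclique u h1 v h2 huv
          rw [Finset.card_insert_of_notMem hxt] at this
          omega
        · intro t ht hclique
          exact hB t (ht.trans hAsub) hclique
      have hcardB : B.card ≤ ((a + 1) + b).choose (a + 1) - 1 := by
        refine ih (a + 1) b B (by omega) ?_ ?_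
        · intro t ht hclique
          exact hA t (ht.trans hBsub) hclique
        · intro t ht hclique
          have hxt : x ∉ t := by
            intro hxt
            exact Finset.notMem_erase x s (Finset.mem_of_mem_filter x (ht hxt))
          have : (insert x t).card ≤ b + 1 := by
            refine hB (insert x t) ?_ ?_
            · intro y hy
              rcases Finset.mem_insert.1 hy with rfl | hy
              · exact hx
              · exact hBsub (ht hy)
            · intro u hu v hv huv
              rcases Finset.mem_insert.1 hu with h1 | h1 <;>
                rcases Finset.mem_insert.1 hv with h2 | h2
              · exact absurd (h1.trans h2.symm) huv
              · subst h1; exact (Finset.mem_filter.1 (ht h2)).2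
              · subst h2; exact fun h => (Finset.mem_filter.1 (ht h1)).2 (hsymm _ _ h)
              · exact hclique u h1 v h2 huv
          rw [Finset.card_insert_of_notMem hxt] at this
          omega
      have hsplit : A.card + B.card = (s.erase x).card :=
        Finset.card_filter_add_card_filter_not _
      have hscard : s.card = (s.erase x).card + 1 := by
        rw [Finset.card_erase_of_mem hx]
        have : 1 ≤ s.card := Finset.card_pos.2 ⟨x, hx⟩
        omega
      have hpascal : ((a + 1) + (b + 1)).choose (a + 1)
          = (a + (b + 1)).choose a + ((a + 1) + b).choose (a + 1) := by
        have h1 : (a + 1) + (b + 1) = (a + b + 1) + 1 := by omega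
        have h2 : a + (b + 1) = a + b + 1 := by omega
        have h3 : (a + 1) + b = a + b + 1 := by omega
        rw [h1, h2, h3, Nat.choose_succ_succ]
      have hp1 : 1 ≤ (a + (b + 1)).choose a := Nat.choose_pos (by omega)
      have hp2 : 1 ≤ ((a + 1) + b).choose (a + 1) := Nat.choose_pos (by omega)
      omega

/-- Projecting a family with pairwise separation to a WBCP space bounds its cardinality. -/
private lemma besi_proj {W Z : Type*} [DecidableEq W] [DecidableEq Z]
    (d : Z → Z → ℝ) (hrefl : ∀ w, d w w = 0) (Q : ℕ)
    (hQ : ∀ (s : Finset Z) (r : Z → ℝ), IsBesicovitchFamily d s r → s.card ≤ Q)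
    (t : Finset W) (r : W → ℝ) (f : W → Z) (z : Z)
    (hpos : ∀ p ∈ t, 0 < r p)
    (hsep : ∀ p ∈ t, ∀ q ∈ t, p ≠ q → max (r p) (r q) < d (f p) (f q))
    (hz : ∀ p ∈ t, d z (f p) ≤ r p) : t.card ≤ Q := by
  classical
  have hinj : ∀ p ∈ t, ∀ q ∈ t, f p = f q → p = q := by
    intro p hp q hq h
    by_contra hne
    have h1 := hsep p hp q hq hne
    rw [h, hrefl] at h1
    have h2 := hpos p hp
    have h3 := le_max_left (r p) (r q)
    linarith
  set r' : Z → ℝ := fun x => if h : ∃ p ∈ t, f p = x then r h.choose else 1 with hr'def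
  have hr' : ∀ p ∈ t, r' (f p) = r p := by
    intro p hp
    have h : ∃ q ∈ t, f q = f p := ⟨p, hp, rfl⟩
    simp only [hr'def, dif_pos h]
    obtain ⟨h1, h2⟩ := h.choose_spec
    rw [hinj _ h1 _ hp h2]
  have hcard : (t.image f).card = t.card :=
    Finset.card_image_of_injOn fun p hp q hq => hinj p hp q hq
  rw [← hcard]
  apply hQ (t.image f) r'
  refine ⟨?_, ?_, z, ?_⟩
  · intro x hx
    obtain ⟨p, hp, rfl⟩ := Finset.mem_image.1 hx
    rw [hr' p hp]; exact hpos p hp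
  · intro x hx y hy hxy
    obtain ⟨p, hp, rfl⟩ := Finset.mem_image.1 hx
    obtain ⟨q, hq, rfl⟩ := Finset.mem_image.1 hy
    have hpq : p ≠ q := fun h => hxy (by rw [h])
    have h1 := hsep p hp q hq hpq
    simp only [QBall, Set.mem_setOf_eq, not_le, hr' q hq]
    have h2 := le_max_right (r p) (r q)
    linarith
  · intro x hx
    obtain ⟨p, hp, rfl⟩ := Finset.mem_image.1 hx
    simp only [QBall, Set.mem_setOf_eq, hr' p hp]
    exact hz p hp

/-- If two metric spaces satisfy WBCP, then their product equipped with the max distance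
satisfies WBCP. -/
theorem statement2 {X Y : Type*} [MetricSpace X] [MetricSpace Y]
    (hX : HasWBCP (fun p q : X => dist p q)) (hY : HasWBCP (fun p q : Y => dist p q)) :
    HasWBCP (fun p q : X × Y => max (dist p.1 q.1) (dist p.2 q.2)) := by
  classical
  obtain ⟨QX, _, hQX⟩ := hX
  obtain ⟨QY, _, hQY⟩ := hY
  refine ⟨max 1 ((QX + QY).choose QX - 1), le_max_left _ _, ?_⟩
  rintro s r ⟨hr, hsep, z, hz⟩
  have hz' : ∀ p ∈ s, max (dist z.1 p.1) (dist z.2 p.2) ≤ r p := by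
    intro p hp
    exact hz p hp
  have hsep' : ∀ p ∈ s, ∀ q ∈ s, p ≠ q →
      r q < max (dist p.1 q.1) (dist p.2 q.2) := by
    intro p hp q hq hpq
    have := hsep p hp q hq hpq
    simpa only [QBall, Set.mem_setOf_eq, not_le] using this
  set R : X × Y → X × Y → Prop := fun p q => max (r p) (r q) < dist p.1 q.1 with hRdef
  have hsymm : ∀ p q, R p q → R q p := by
    intro p q h
    simp only [hRdef] at h ⊢
    rwa [max_comm, dist_comm]
  refine le_trans ?_ (le_max_right _ _)
  refine ramsey_aux R hsymm (QX + QY) QX QY s le_rfl ?_ ?_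
  · -- R-cliques project to Besicovitch families in X
    intro t ht hclique
    refine besi_proj (fun p q : X => dist p q) (fun _ => dist_self _) QX hQX t r
      Prod.fst z.1 (fun p hp => hr p (ht hp)) ?_ ?_
    · intro p hp q hq hpq
      exact hclique p hp q hq hpq
    · intro p hp
      exact le_trans (le_max_left _ _) (hz' p (ht hp))
  · -- ¬R-cliques project to Besicovitch families in Y
    intro t ht hclique
    refine besi_proj (fun p q : Y => dist p q) (fun _ => dist_self _) QY hQY t r
      Prod.snd z.2 (fun p hp => hr p (ht hp)) ?_ ?_
    · intro p hp q hq hpq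
      have hnR := hclique p hp q hq hpq
      simp only [hRdef, not_lt] at hnR
      -- hnR : dist p.1 q.1 ≤ max (r p) (r q)
      rcases le_total (r p) (r q) with hle | hle
      · have h1 := hsep' p (ht hp) q (ht hq) hpq
        -- r q < max (dist p.1 q.1) (dist p.2 q.2)
        have hmax : max (r p) (r q) = r q := max_eq_right hle
        rw [hmax] at hnR ⊢
        by_contra hcon
        push_neg at hcon
        have : max (dist p.1 q.1) (dist p.2 q.2) ≤ r q := max_le hnR hcon
        linarith
      · have h1 := hsep' q (ht hq) p (ht hp) hpq.symm
        have hmax : max (r p) (r q) = r p := max_eq_left hle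
        rw [hmax] at hnR ⊢
        by_contra hcon
        push_neg at hcon
        have : max (dist q.1 p.1) (dist q.2 p.2) ≤ r p := by
          rw [dist_comm q.1 p.1, dist_comm q.2 p.2]
          exact max_le hnR hcon
        linarith
    · intro p hp
      exact le_trans (le_max_right _ _) (hz' p (ht hp))
end

section
/- Let (X,d_X) and (Y,d_Y) be quasi-metric spaces and assume there exists a submetry π from (X,d_X) onto (Y,d_Y), i.e., a surjective map π : X → Y such that π(B_{d_X}(p,r)) = B_{d_Y}(π(p),r) for all p ∈ X and all r > 0. If (X,d_X) satisfies the Weak Besicovitch Covering Property, then (Y,d_Y) satisfies the Weak Besicovitch Covering Property. -/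
/-- If there is a submetry from a quasi-metric space `(X, dX)` onto a quasi-metric space
`(Y, dY)` and `(X, dX)` satisfies WBCP, then `(Y, dY)` satisfies WBCP. -/
theorem statement3 {X Y : Type*} (dX : X → X → ℝ) (dY : Y → Y → ℝ)
    (hdX : IsQuasiDist dX) (hdY : IsQuasiDist dY)
    (π : X → Y) (hsurj : Function.Surjective π)
    (hsubmetry : ∀ (p : X) (r : ℝ), 0 < r → π '' QBall dX p r = QBall dY (π p) r)
    (h : HasWBCP dX) : HasWBCP dY := by
  classical
  obtain ⟨Q, hQ, hX⟩ := h
  refine ⟨Q, hQ, ?_⟩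
  rintro s r ⟨hr, hsep, z, hz⟩
  obtain ⟨w, hw⟩ := hsurj z
  have key : ∀ y ∈ s, ∃ x, π x = y ∧ dX w x ≤ r y := by
    intro y hy
    have h1 : y ∈ QBall dY (π w) (r y) := by
      rw [hw]
      show dY y z ≤ r y
      rw [hdY.2.1]
      exact hz y hy
    rw [← hsubmetry w (r y) (hr y hy)] at h1
    obtain ⟨x, hx1, hx2⟩ := h1
    refine ⟨x, hx2, ?_⟩
    rw [hdX.2.1]
    exact hx1
  set f : Y → X := fun y =>
    if h : ∃ x, π x = y ∧ dX w x ≤ r y then h.choose else (hsurj y).choose with hf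
  have hf1 : ∀ y, π (f y) = y := by
    intro y
    by_cases h : ∃ x, π x = y ∧ dX w x ≤ r y
    · simp only [hf, dif_pos h]; exact h.choose_spec.1
    · simp only [hf, dif_neg h]; exact (hsurj y).choose_spec
  have hf2 : ∀ y ∈ s, dX w (f y) ≤ r y := by
    intro y hy
    have h := key y hy
    simp only [hf, dif_pos h]
    exact h.choose_spec.2
  have hfinj : Function.Injective f := by
    intro a b hab
    have := congrArg π hab
    rwa [hf1, hf1] at this
  have hcard : (s.image f).card = s.card := Finset.card_image_of_injective s hfinj
  rw [← hcard]
  apply hX (s.image f) (fun x => r (π x))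
  refine ⟨?_, ?_, w, ?_⟩
  · intro x hx
    obtain ⟨y, hy, rfl⟩ := Finset.mem_image.mp hx
    show 0 < r (π (f y))
    rw [hf1]
    exact hr y hy
  · intro x hx x' hx' hne hmem
    obtain ⟨a, ha, rfl⟩ := Finset.mem_image.mp hx
    obtain ⟨b, hb, rfl⟩ := Finset.mem_image.mp hx'
    have hab : a ≠ b := fun e => hne (by rw [e])
    have : f a ∈ QBall dX (f b) (r b) := by
      have hmem' : f a ∈ QBall dX (f b) (r (π (f b))) := hmem
      rwa [hf1] at hmem'
    have h2 : a ∈ QBall dY (π (f b)) (r b) := by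
      rw [← hsubmetry (f b) (r b) (hr b hb)]
      exact ⟨f a, this, hf1 a⟩
    rw [hf1] at h2
    exact hsep a ha b hb hab h2
  · intro x hx
    obtain ⟨y, hy, rfl⟩ := Finset.mem_image.mp hx
    show dX w (f y) ≤ r (π (f y))
    rw [hf1]
    exact hf2 y hy
end

section
/- Let (X,d) be a doubling metric space. Then there exists a quasi-distance ρ on X that is continuous on X × X (for the topology induced by d), is biLipschitz equivalent to d (i.e., there is L ≥ 1 with L^{-1}·d(x,y) ≤ ρ(x,y) ≤ L·d(x,y) for all x,y ∈ X), and such that (X,ρ) satisfies the Besicovitch Covering Property. -/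
open Metric Set

namespace Statement6Aux

lemma abs_max_zero_sub (a b : ℝ) : |max 0 a - max 0 b| ≤ |a - b| := by
  have := abs_max_sub_max_le_abs a b 0
  simpa [max_comm] using this

/-- Geometric bound for an ℕ-indexed series. -/
lemma geom_bound {a : ℕ → ℝ} {A q : ℝ} (hq0 : 0 ≤ q) (hq1 : q < 1)
    (h : ∀ k, |a k| ≤ A * q ^ k) :
    Summable a ∧ |∑' k, a k| ≤ A / (1 - q) := by
  have hg : Summable (fun k : ℕ => A * q ^ k) :=
    (summable_geometric_of_lt_one hq0 hq1).mul_left A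
  have hs : Summable a := by
    apply Summable.of_norm_bounded hg
    intro k; simpa using h k
  refine ⟨hs, ?_⟩
  calc |∑' k, a k| = ‖∑' k, a k‖ := (Real.norm_eq_abs _).symm
    _ ≤ ∑' k, ‖a k‖ := norm_tsum_le_tsum_norm (by simpa [Real.norm_eq_abs] using hs.abs)
    _ = ∑' k, |a k| := by simp [Real.norm_eq_abs]
    _ ≤ ∑' k, A * q ^ k := Summable.tsum_le_tsum h hs.abs hg
    _ = A / (1 - q) := by
        rw [tsum_mul_left, tsum_geometric_of_lt_one hq0 hq1, div_eq_mul_inv]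

/-- Splitting an ℤ-indexed series at `n₀`, with geometric bounds on both tails. -/
lemma sum_split {a : ℤ → ℝ} {n₀ : ℤ} {A B q : ℝ} (hq0 : 0 ≤ q) (hq1 : q < 1)
    (hf : ∀ k : ℕ, |a (n₀ + 1 + k)| ≤ A * q ^ k)
    (hb : ∀ k : ℕ, |a (n₀ - 1 - k)| ≤ B * q ^ k) :
    Summable a ∧ |(∑' n, a n) - a n₀| ≤ (A + B) / (1 - q) := by
  obtain ⟨hsf, hbf⟩ := geom_bound hq0 hq1 hf
  obtain ⟨hsb, hbb⟩ := geom_bound hq0 hq1 hb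
  -- forward part including n₀
  have hsf' : Summable (fun k : ℕ => a (n₀ + k)) := by
    rw [← summable_nat_add_iff 1]
    convert hsf using 2 with k
    · rfl
    push_cast; ring_nf
  have hfsum : (∑' k : ℕ, a (n₀ + k)) = a n₀ + ∑' k : ℕ, a (n₀ + 1 + k) := by
    rw [Summable.tsum_eq_zero_add hsf']
    congr 1
    · norm_num
    · apply tsum_congr (fun k => ?_)
      congr 1; push_cast; ring
  have h1 : HasSum (fun k : ℕ => a (n₀ + k)) (a n₀ + ∑' k : ℕ, a (n₀ + 1 + k)) := by
    rw [← hfsum]; exact hsf'.hasSum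
  have h2 : HasSum (fun k : ℕ => a (n₀ + -(k + 1))) (∑' k : ℕ, a (n₀ - 1 - k)) := by
    have : (fun k : ℕ => a (n₀ + -((k:ℤ) + 1))) = fun k : ℕ => a (n₀ - 1 - k) := by
      funext k; congr 1; ring
    rw [this]; exact hsb.hasSum
  have hz : HasSum (fun z : ℤ => a (n₀ + z))
      ((a n₀ + ∑' k : ℕ, a (n₀ + 1 + k)) + ∑' k : ℕ, a (n₀ - 1 - k)) :=
    HasSum.of_nat_of_neg_add_one h1 h2
  have ha : HasSum a ((a n₀ + ∑' k : ℕ, a (n₀ + 1 + k)) + ∑' k : ℕ, a (n₀ - 1 - k)) :=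
    (Equiv.hasSum_iff (Equiv.addLeft n₀)).mp hz
  refine ⟨ha.summable, ?_⟩
  rw [ha.tsum_eq]
  have : a n₀ + (∑' k : ℕ, a (n₀ + 1 + k)) + (∑' k : ℕ, a (n₀ - 1 - k)) - a n₀
      = (∑' k : ℕ, a (n₀ + 1 + k)) + (∑' k : ℕ, a (n₀ - 1 - k)) := by ring
  rw [this]
  calc |(∑' k : ℕ, a (n₀ + 1 + k)) + (∑' k : ℕ, a (n₀ - 1 - k))|
      ≤ |∑' k : ℕ, a (n₀ + 1 + k)| + |∑' k : ℕ, a (n₀ - 1 - k)| := abs_add_le _ _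
    _ ≤ A / (1 - q) + B / (1 - q) := add_le_add hbf hbb
    _ = (A + B) / (1 - q) := by ring



/-- Iterated update used to build a greedy coloring. -/
def iterUp (g : (ℕ → ℕ) → ℕ → ℕ) : ℕ → (ℕ → ℕ)
  | 0 => fun _ => 0
  | n + 1 => Function.update (iterUp g n) n (g (iterUp g n) n)

/-- The greedy coloring built from a step function `g`. -/
def greedyCol (g : (ℕ → ℕ) → ℕ → ℕ) (n : ℕ) : ℕ := iterUp g (n + 1) n

lemma iterUp_stable (g : (ℕ → ℕ) → ℕ → ℕ) :
    ∀ {n m : ℕ}, m < n → iterUp g n m = greedyCol g m := by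
  intro n
  induction n with
  | zero => intro m hm; omega
  | succ n ih =>
    intro m hm
    rcases Nat.lt_or_ge m n with h | h
    · have hne : m ≠ n := by omega
      rw [iterUp, Function.update_of_ne hne, ih h]
    · have : m = n := by omega
      subst this; rfl

/-- If `g prev n` only depends on `prev` at indices `< n`, the greedy coloring is a
fixed point. -/
lemma greedyCol_eq (g : (ℕ → ℕ) → ℕ → ℕ)
    (hg : ∀ prev prev' n, (∀ m, m < n → prev m = prev' m) → g prev n = g prev' n)
    (n : ℕ) : greedyCol g n = g (greedyCol g) n := by
  have : greedyCol g n = g (iterUp g n) n := by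
    rw [greedyCol, iterUp, Function.update_self]
  rw [this]
  exact hg _ _ _ (fun m hm => iterUp_stable g hm)

/-- Greedy coloring of a countable graph with degrees `< K` by `K` colors. -/
lemma exists_coloring {α : Type*} (S : Set α) (G : α → α → Prop)
    (hsymm : ∀ a b, G a b → G b a) (K : ℕ) (hK : 0 < K)
    (hcount : S.Countable)
    (hfin : ∀ a ∈ S, ({b | b ∈ S ∧ b ≠ a ∧ G a b}).Finite)
    (hdeg : ∀ a ∈ S, ∀ F : Finset α, (↑F : Set α) ⊆ {b | b ∈ S ∧ b ≠ a ∧ G a b} →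
      F.card < K) :
    ∃ col : α → ℕ, (∀ x, col x < K) ∧
      ∀ a ∈ S, ∀ b ∈ S, a ≠ b → G a b → col a ≠ col b := by
  classical
  -- an injection of `S` into ℕ
  have : Countable ↥S := hcount.to_subtype
  obtain ⟨e₀, he₀⟩ := (countable_iff_exists_injective ↥S).mp this
  set e : α → ℕ := fun x => if h : x ∈ S then e₀ ⟨x, h⟩ else 0 with he
  have heInj : ∀ a ∈ S, ∀ b ∈ S, e a = e b → a = b := by
    intro a ha b hb hab
    simp only [he, dif_pos ha, dif_pos hb] at hab
    exact congrArg Subtype.val (he₀ hab)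
  -- the step function
  set g : (ℕ → ℕ) → ℕ → ℕ := fun prev n =>
    if h : ∃ a, a ∈ S ∧ e a = n then
      sInf {c : ℕ | c < K ∧
        c ∉ (fun b => prev (e b)) '' {b | b ∈ S ∧ b ≠ h.choose ∧ G h.choose b ∧ e b < n}}
    else 0 with hgdef
  have hloc : ∀ prev prev' n, (∀ m, m < n → prev m = prev' m) → g prev n = g prev' n := by
    intro prev prev' n hm
    simp only [hgdef]
    split
    · next h =>
      have himg : (fun b => prev (e b)) '' {b | b ∈ S ∧ b ≠ h.choose ∧ G h.choose b ∧ e b < n}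
          = (fun b => prev' (e b)) '' {b | b ∈ S ∧ b ≠ h.choose ∧ G h.choose b ∧ e b < n} := by
        apply Set.image_congr
        rintro b ⟨-, -, -, hbn⟩
        exact hm _ hbn
      rw [himg]
    · rfl
  set col : α → ℕ := fun x => greedyCol g (e x) with hcol
  -- key fact : the candidate set is nonempty whenever the branch is taken
  have hne : ∀ (prev : ℕ → ℕ) (n : ℕ) (h : ∃ a, a ∈ S ∧ e a = n),
      ∃ c : ℕ, c < K ∧
        c ∉ (fun b => prev (e b)) '' {b | b ∈ S ∧ b ≠ h.choose ∧ G h.choose b ∧ e b < n} := by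
    intro prev n h
    set a := h.choose with ha
    obtain ⟨haS, haE⟩ := h.choose_spec
    by_contra hcon
    push_neg at hcon
    -- then range K injects into the image of the finite neighbor set
    set Fnb : Finset α := ((hfin a haS).toFinset.filter (fun b => e b < n)) with hFnb
    have hsub : (↑Fnb : Set α) ⊆ {b | b ∈ S ∧ b ≠ a ∧ G a b} := by
      intro b hb
      simp only [hFnb, Finset.coe_filter, Set.Finite.mem_toFinset] at hb
      exact ⟨hb.1.1, hb.1.2.1, hb.1.2.2⟩
    have hcard : Fnb.card < K := hdeg a haS Fnb hsub
    have himg : ∀ c < K, c ∈ Finset.image (fun b => prev (e b)) Fnb := by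
      intro c hc
      obtain ⟨b, hb, hbe⟩ := hcon c hc
      simp only [Set.mem_setOf_eq] at hb
      apply Finset.mem_image.mpr
      refine ⟨b, ?_, hbe⟩
      simp only [hFnb, Finset.mem_filter, Set.Finite.mem_toFinset]
      exact ⟨⟨hb.1, hb.2.1, hb.2.2.1⟩, hb.2.2.2⟩
    have : Finset.range K ⊆ Finset.image (fun b => prev (e b)) Fnb := by
      intro c hc
      exact himg c (Finset.mem_range.mp hc)
    have := Finset.card_le_card this
    rw [Finset.card_range] at this
    have := Finset.card_image_le (s := Fnb) (f := fun b => prev (e b))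
    omega
  have hltK : ∀ n, greedyCol g n < K := by
    intro n
    rw [greedyCol_eq g hloc]
    simp only [hgdef]
    split
    · next h =>
      obtain ⟨c, hc1, hc2⟩ := hne (greedyCol g) n h
      have hnon : ({c : ℕ | c < K ∧
          c ∉ (fun b => greedyCol g (e b)) ''
            {b | b ∈ S ∧ b ≠ h.choose ∧ G h.choose b ∧ e b < n}}).Nonempty := ⟨c, hc1, hc2⟩
      exact (Nat.sInf_mem hnon).1
    · exact hK
  refine ⟨col, fun x => hltK (e x), ?_⟩
  -- the coloring property
  have main : ∀ a ∈ S, ∀ b ∈ S, a ≠ b → G a b → e b < e a → col a ≠ col b := by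
    intro a ha b hb hab hG hlt
    have hex : ∃ a', a' ∈ S ∧ e a' = e a := ⟨a, ha, rfl⟩
    have hchoose : hex.choose = a := heInj _ hex.choose_spec.1 _ ha hex.choose_spec.2
    have hcolEq : col a = sInf {c : ℕ | c < K ∧
        c ∉ (fun b => greedyCol g (e b)) ''
          {b | b ∈ S ∧ b ≠ hex.choose ∧ G hex.choose b ∧ e b < e a}} := by
      show greedyCol g (e a) = _
      rw [greedyCol_eq g hloc]
      simp only [hgdef]
      rw [dif_pos hex]
    have hnon : ({c : ℕ | c < K ∧
        c ∉ (fun b => greedyCol g (e b)) ''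
          {b | b ∈ S ∧ b ≠ hex.choose ∧ G hex.choose b ∧ e b < e a}}).Nonempty := by
      obtain ⟨c, hc1, hc2⟩ := hne (greedyCol g) (e a) hex
      exact ⟨c, hc1, hc2⟩
    have hmem := Nat.sInf_mem hnon
    rw [← hcolEq] at hmem
    intro hEq
    apply hmem.2
    refine ⟨b, ?_, ?_⟩
    · rw [hchoose]
      exact ⟨hb, fun h => hab h.symm, hG, hlt⟩
    · exact hEq.symm
  intro a ha b hb hab hG
  rcases Nat.lt_or_ge (e b) (e a) with h | h
  · exact main a ha b hb hab hG h
  · have hne' : e a ≠ e b := fun hEq => hab (heInj a ha b hb hEq)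
    have : e a < e b := by omega
    exact (main b hb a ha (fun hEq => hab hEq.symm) (hsymm a b hG) this).symm


end Statement6Aux

namespace Statement6Aux

variable {X : Type*} [MetricSpace X]

lemma qball_mono {p : X} {r r' : ℝ} (h : r ≤ r') :
    QBall dist p r ⊆ QBall dist p r' := fun q hq => le_trans hq h

/-- Iterated doubling: a ball of radius `2^n * r` is covered by `C^n` balls of radius `r`. -/
lemma doubling_iterate {C : ℕ} (hdb : ∀ (p : X) (r : ℝ), 0 < r →
      ∃ t : Finset X, t.card ≤ C ∧ QBall dist p (2 * r) ⊆ ⋃ x ∈ t, QBall dist x r) :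
    ∀ (n : ℕ) (p : X) (r : ℝ), 0 < r →
      ∃ t : Finset X, t.card ≤ C ^ n ∧ QBall dist p (2 ^ n * r) ⊆ ⋃ x ∈ t, QBall dist x r := by
  intro n
  induction n with
  | zero =>
    intro p r hr
    refine ⟨{p}, by simp, ?_⟩
    intro q hq
    simp only [Finset.mem_singleton, Set.mem_iUnion]
    exact ⟨p, by simp, by simpa using hq⟩
  | succ n ih =>
    intro p r hr
    obtain ⟨t₀, ht₀c, ht₀⟩ := ih p (2 * r) (by linarith)
    classical
    choose g hgc hgs using fun x : X => hdb x r hr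
    refine ⟨t₀.biUnion g, ?_, ?_⟩
    · calc (t₀.biUnion g).card ≤ t₀.card * C := Finset.card_biUnion_le_card_mul _ _ _
            (fun x _ => hgc x)
        _ ≤ C ^ n * C := Nat.mul_le_mul_right _ ht₀c
        _ = C ^ (n + 1) := (pow_succ C n).symm
    · intro q hq
      have hq' : q ∈ QBall dist p (2 ^ n * (2 * r)) := by
        have : (2:ℝ) ^ (n+1) * r = 2 ^ n * (2 * r) := by ring
        rw [← this]; exact hq
      obtain ⟨x, hx⟩ := Set.mem_iUnion.mp (ht₀ hq')
      simp only [Set.mem_iUnion, exists_prop] at hx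
      obtain ⟨hxt, hqx⟩ := hx
      obtain ⟨z, hz⟩ := Set.mem_iUnion.mp (hgs x hqx)
      simp only [Set.mem_iUnion, exists_prop] at hz
      refine Set.mem_iUnion.mpr ⟨z, ?_⟩
      simp only [Set.mem_iUnion, exists_prop]
      exact ⟨Finset.mem_biUnion.mpr ⟨x, hxt, hz.1⟩, hz.2⟩

/-- Packing bound: an `s`-separated finite set inside a ball of radius `2^n * (s/2)`
has at most `C^n` elements. -/
lemma packing_bound {C : ℕ} (hdb : ∀ (p : X) (r : ℝ), 0 < r →
      ∃ t : Finset X, t.card ≤ C ∧ QBall dist p (2 * r) ⊆ ⋃ x ∈ t, QBall dist x r)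
    (n : ℕ) (p : X) (s R : ℝ) (hs : 0 < s) (hR : R ≤ 2 ^ n * (s / 2))
    (F : Finset X) (hF : (↑F : Set X) ⊆ QBall dist p R)
    (hsep : ∀ a ∈ F, ∀ b ∈ F, a ≠ b → s < dist a b) : F.card ≤ C ^ n := by
  classical
  obtain ⟨t, htc, hts⟩ := doubling_iterate hdb n p (s / 2) (by linarith)
  by_contra hcon
  push_neg at hcon
  have hmap : ∀ a : X, ∃ x : X, a ∈ F → x ∈ t ∧ a ∈ QBall dist x (s / 2) := by
    intro a
    by_cases ha : a ∈ F
    · have : a ∈ QBall dist p (2 ^ n * (s / 2)) := qball_mono hR (hF ha)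
      obtain ⟨x, hx⟩ := Set.mem_iUnion.mp (hts this)
      simp only [Set.mem_iUnion, exists_prop] at hx
      exact ⟨x, fun _ => ⟨hx.1, hx.2⟩⟩
    · exact ⟨p, fun h => absurd h ha⟩
  choose φ hφ using hmap
  have hlt : t.card < F.card := lt_of_le_of_lt htc hcon
  obtain ⟨a, ha, b, hb, hab, hEq⟩ :=
    Finset.exists_ne_map_eq_of_card_lt_of_maps_to hlt (fun a ha => (hφ a ha).1)
  have h1 : dist a (φ a) ≤ s / 2 := (hφ a ha).2
  have h2 : dist b (φ b) ≤ s / 2 := (hφ b hb).2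
  have : dist a b ≤ s := by
    calc dist a b ≤ dist a (φ a) + dist b (φ b) := by
          rw [hEq]; exact dist_triangle_right a b (φ b)
      _ ≤ s / 2 + s / 2 := add_le_add h1 h2
      _ = s := by ring
  exact absurd (hsep a ha b hb hab) (not_lt.mpr this)

end Statement6Aux

namespace Test2

open Statement6Aux

variable {X : Type*} [MetricSpace X]

/-- Separated subsets of balls are finite with a uniform cardinality bound. -/
lemma sep_finite {C : ℕ} (hdb : ∀ (p : X) (r : ℝ), 0 < r →
      ∃ t : Finset X, t.card ≤ C ∧ QBall dist p (2 * r) ⊆ ⋃ x ∈ t, QBall dist x r)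
    (n : ℕ) (p : X) (s R : ℝ) (hs : 0 < s) (hR : R ≤ 2 ^ n * (s / 2))
    (S : Set X) (hS : S ⊆ QBall dist p R)
    (hsep : ∀ a ∈ S, ∀ b ∈ S, a ≠ b → s < dist a b) :
    S.Finite ∧ ∀ F : Finset X, (↑F : Set X) ⊆ S → F.card ≤ C ^ n := by
  have hbd : ∀ F : Finset X, (↑F : Set X) ⊆ S → F.card ≤ C ^ n := by
    intro F hF
    exact packing_bound hdb n p s R hs hR F (fun a ha => hS (hF ha))
      (fun a ha b hb hab => hsep a (hF ha) b (hF hb) hab)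
  constructor
  · by_contra hinf
    obtain ⟨F, hFS, hFc⟩ := Set.Infinite.exists_subset_card_eq hinf (C ^ n + 1)
    have := hbd F hFS
    omega
  · exact hbd

/-- Existence of a maximal `s`-separated set, together with a coloring. -/
lemma exists_net_coloring {C : ℕ} (hC1 : 1 ≤ C)
    (hdb : ∀ (p : X) (r : ℝ), 0 < r →
      ∃ t : Finset X, t.card ≤ C ∧ QBall dist p (2 * r) ⊆ ⋃ x ∈ t, QBall dist x r)
    (x₀ : X) (s : ℝ) (hs : 0 < s) :
    ∃ (M : Set X) (col : X → ℕ),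
      (∀ x, ∃ a ∈ M, dist x a ≤ s) ∧
      (∀ x, col x < C ^ 6) ∧
      (∀ a ∈ M, ∀ b ∈ M, a ≠ b → col a = col b → 25 * s < dist a b) := by
  classical
  -- Zorn's lemma for maximal separated sets
  set 𝒮 : Set (Set X) := {S | ∀ a ∈ S, ∀ b ∈ S, a ≠ b → s < dist a b} with h𝒮
  obtain ⟨M, hM⟩ : ∃ M, Maximal (· ∈ 𝒮) M := by
    apply zorn_subset
    intro c hc hchain
    refine ⟨⋃₀ c, ?_, fun t ht => Set.subset_sUnion_of_mem ht⟩
    intro a ha b hb hab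
    obtain ⟨s₁, hs₁, ha₁⟩ := ha
    obtain ⟨s₂, hs₂, hb₂⟩ := hb
    rcases hchain.total hs₁ hs₂ with h | h
    · exact hc hs₂ a (h ha₁) b hb₂ hab
    · exact hc hs₁ a ha₁ b (h hb₂) hab
  have hsepM : ∀ a ∈ M, ∀ b ∈ M, a ≠ b → s < dist a b := hM.1
  have hnet : ∀ x, ∃ a ∈ M, dist x a ≤ s := by
    intro x
    by_contra hcon
    push_neg at hcon
    have hxM : x ∉ M := by
      intro hx
      have := hcon x hx
      simp at this
      linarith
    have hins : insert x M ∈ 𝒮 := by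
      intro a ha b hb hab
      rcases ha with rfl | haM
      · rcases hb with rfl | hbM
        · exact absurd rfl hab
        · exact hcon b hbM
      · rcases hb with rfl | hbM
        · rw [dist_comm]
          exact hcon a haM
        · exact hsepM a haM b hbM hab
    have := hM.2 hins (Set.subset_insert x M)
    exact hxM (this (Set.mem_insert x M))
  -- countability of M
  have hMcount : M.Countable := by
    have hcov : M = ⋃ n : ℕ, M ∩ QBall dist x₀ n := by
      ext q
      simp only [Set.mem_iUnion, Set.mem_inter_iff]
      constructor
      · intro hq
        exact ⟨⌈dist q x₀⌉₊, hq, by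
          simp only [QBall, Set.mem_setOf_eq]
          exact Nat.le_ceil _⟩
      · rintro ⟨n, hq, -⟩
        exact hq
    rw [hcov]
    apply Set.countable_iUnion
    intro n
    obtain ⟨m, hm⟩ := pow_unbounded_of_one_lt ((n : ℝ) / (s / 2)) (by norm_num : (1:ℝ) < 2)
    have hnm : (n : ℝ) ≤ 2 ^ m * (s / 2) := by
      rw [div_lt_iff₀ (by linarith)] at hm
      linarith
    exact ((sep_finite hdb m x₀ s n hs hnm _ Set.inter_subset_right
      (fun a ha b hb hab => hsepM a ha.1 b hb.1 hab)).1).countable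
  -- degree bound and coloring
  have h2532 : 25 * s ≤ 2 ^ 6 * (s / 2) := by nlinarith
  obtain ⟨col, hcolK, hcolP⟩ := exists_coloring M (fun a b => dist a b ≤ 25 * s)
    (fun a b h => by simpa [dist_comm] using h) (C ^ 6) (by positivity) hMcount
    (fun a ha => by
      refine Set.Finite.subset ((sep_finite hdb 6 a s (25 * s) hs h2532
        (M ∩ QBall dist a (25 * s)) Set.inter_subset_right
        (fun a' ha' b hb hab => hsepM a' ha'.1 b hb.1 hab)).1) ?_
      rintro b ⟨hbM, -, hbd⟩
      exact ⟨hbM, by rw [dist_comm] at hbd; exact hbd⟩)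
    (fun a ha F hF => by
      have haF : a ∉ F := by
        intro h
        exact (hF h).2.1 rfl
      have hins : (↑(insert a F) : Set X) ⊆ M ∩ QBall dist a (25 * s) := by
        intro b hb
        simp only [Finset.coe_insert, Set.mem_insert_iff] at hb
        rcases hb with rfl | hb
        · exact ⟨ha, by simp [QBall, dist_self]; positivity⟩
        · obtain ⟨hbM, -, hbd⟩ := hF hb
          exact ⟨hbM, by rw [dist_comm] at hbd; exact hbd⟩
      have hcard : (insert a F).card ≤ C ^ 6 :=
        packing_bound hdb 6 a s (25 * s) hs h2532 (insert a F)
          (fun b hb => (hins hb).2)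
          (fun a' ha' b hb hab => hsepM a' (hins ha').1 b (hins hb).1 hab)
      rw [Finset.card_insert_of_notMem haF] at hcard
      omega)
  refine ⟨M, col, hnet, hcolK, ?_⟩
  intro a ha b hb hab hcEq
  by_contra hle
  push_neg at hle
  exact hcolP a ha b hb hab hle hcEq

end Test2

namespace Statement6Aux

noncomputable section

variable {X : Type*} [MetricSpace X]

/-- The scale `4^(-j)`. -/
def sc (j : ℤ) : ℝ := (4:ℝ) ^ (-j)

/-- The weight `2^(-j)`. -/
def wt (j : ℤ) : ℝ := (2:ℝ) ^ (-j)

lemma sc_pos (j : ℤ) : 0 < sc j := zpow_pos (by norm_num) _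

lemma wt_pos (j : ℤ) : 0 < wt j := zpow_pos (by norm_num) _

lemma wt_add (j k : ℤ) : wt (j + k) = wt j * wt k := by
  simp only [wt, neg_add, zpow_add₀ (by norm_num : (2:ℝ) ≠ 0)]

lemma wt_sq (j : ℤ) : wt j ^ 2 = sc j := by
  have h4 : (4:ℝ) = (2:ℝ) ^ (2:ℤ) := by norm_num
  rw [sc, h4, ← zpow_mul]
  rw [wt, sq, ← zpow_add₀ (by norm_num : (2:ℝ) ≠ 0)]
  congr 1
  ring

lemma wt_mul_wt_neg (j : ℤ) : wt j * wt (-j) = 1 := by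
  rw [← wt_add]; simp [wt]

lemma wt_six : wt 6 = 1/64 := by
  rw [wt]
  norm_num

lemma wt_neg_six : wt (-6) = 64 := by
  rw [wt]
  norm_num

lemma wt_block_fwd (J : ℤ) (k : ℕ) : wt (J + 6 * k) = wt J * (1/64) ^ k := by
  induction k with
  | zero => simp
  | succ k ih =>
    have : J + 6 * ((k:ℤ) + 1) = (J + 6 * k) + 6 := by ring
    push_cast
    rw [this, wt_add, ih, wt_six]
    ring

lemma wt_block_bwd (J : ℤ) (k : ℕ) : wt (J - 6 * k) = wt J * 64 ^ k := by
  induction k with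
  | zero => simp
  | succ k ih =>
    have : J - 6 * ((k:ℤ) + 1) = (J - 6 * k) + (-6) := by ring
    push_cast
    rw [this, wt_add, ih, wt_neg_six]
    ring

variable (A : ℤ → Set X) (col : ℤ → X → ℕ)

/-- The color class of `c` at scale `j`. -/
def sCl (j : ℤ) (c : ℕ) : Set X := {a | a ∈ A j ∧ col j a = c}

/-- The bump function associated to a color class. -/
def gg (j : ℤ) (c : ℕ) (x : X) : ℝ :=
  max 0 (1 - Metric.infDist x (sCl A col j c) / (4 * sc j))

lemma gg_nonneg (j : ℤ) (c : ℕ) (x : X) : 0 ≤ gg A col j c x := le_max_left _ _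

lemma gg_le_one (j : ℤ) (c : ℕ) (x : X) : gg A col j c x ≤ 1 := by
  apply max_le
  · norm_num
  · have h1 : 0 ≤ Metric.infDist x (sCl A col j c) := Metric.infDist_nonneg
    have h2 : 0 < 4 * sc j := by have := sc_pos j; linarith
    have : 0 ≤ Metric.infDist x (sCl A col j c) / (4 * sc j) := div_nonneg h1 h2.le
    linarith

lemma gg_lip (j : ℤ) (c : ℕ) (x y : X) :
    |gg A col j c x - gg A col j c y| ≤ dist x y / (4 * sc j) := by
  have h2 : 0 < 4 * sc j := by have := sc_pos j; linarith
  refine le_trans (abs_max_zero_sub _ _) ?_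
  have : (1 - Metric.infDist x (sCl A col j c) / (4 * sc j)) -
      (1 - Metric.infDist y (sCl A col j c) / (4 * sc j))
      = (Metric.infDist y (sCl A col j c) - Metric.infDist x (sCl A col j c)) / (4 * sc j) := by
    ring
  rw [this, abs_div, abs_of_pos h2, div_le_div_iff_of_pos_right h2]
  have hxy := Metric.infDist_le_infDist_add_dist (x := x) (y := y) (s := sCl A col j c)
  have hyx := Metric.infDist_le_infDist_add_dist (x := y) (y := x) (s := sCl A col j c)
  rw [dist_comm y x] at hyx
  rw [abs_le]
  constructor <;> linarith

lemma gg_diff_le_one (j : ℤ) (c : ℕ) (x y : X) :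
    |gg A col j c x - gg A col j c y| ≤ 1 := by
  have h1 := gg_nonneg A col j c x
  have h2 := gg_le_one A col j c x
  have h3 := gg_nonneg A col j c y
  have h4 := gg_le_one A col j c y
  rw [abs_le]
  constructor <;> linarith

/-- The summand of the embedding. -/
def term (j : ℤ) (c : ℕ) (x y : X) : ℝ :=
  wt j * (gg A col j c x - gg A col j c y)

lemma term_bound1 (j : ℤ) (c : ℕ) (x y : X) : |term A col j c x y| ≤ wt j := by
  rw [term, abs_mul, abs_of_pos (wt_pos j)]
  calc wt j * |gg A col j c x - gg A col j c y| ≤ wt j * 1 :=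
        mul_le_mul_of_nonneg_left (gg_diff_le_one A col j c x y) (wt_pos j).le
    _ = wt j := mul_one _

lemma term_bound2 (j : ℤ) (c : ℕ) (x y : X) :
    |term A col j c x y| ≤ dist x y / 4 * wt (-j) := by
  rw [term, abs_mul, abs_of_pos (wt_pos j)]
  have h := gg_lip A col j c x y
  calc wt j * |gg A col j c x - gg A col j c y| ≤ wt j * (dist x y / (4 * sc j)) :=
        mul_le_mul_of_nonneg_left h (wt_pos j).le
    _ = dist x y / 4 * (wt j / sc j) := by
        field_simp
    _ = dist x y / 4 * wt (-j) := by
        congr 1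
        rw [eq_comm, eq_div_iff (sc_pos j).ne']
        rw [← wt_sq j, sq, ← mul_assoc, mul_comm (wt (-j)) (wt j), wt_mul_wt_neg, one_mul]

end

end Statement6Aux

namespace Statement6Aux

variable {X : Type*} [MetricSpace X] (A : ℤ → Set X) (col : ℤ → X → ℕ)

lemma sqrt_sc (j : ℤ) : Real.sqrt (sc j) = wt j := by
  rw [← wt_sq, Real.sqrt_sq (wt_pos j).le]

/-- Summability and upper bound for block sums. -/
lemma block_ub (i : ℤ) (c : ℕ) (x y : X) :
    Summable (fun n : ℤ => term A col (i + 6 * n) c x y) ∧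
    |∑' n : ℤ, term A col (i + 6 * n) c x y| ≤ 2 * Real.sqrt (dist x y) := by
  rcases eq_or_ne x y with rfl | hxy
  · have hz : (fun n : ℤ => term A col (i + 6 * n) c x x) = fun _ => 0 := by
      funext n
      simp [term]
    rw [hz]
    refine ⟨summable_zero, ?_⟩
    simp [Real.sqrt_nonneg]
  · set d := dist x y with hd
    have hd0 : 0 < d := dist_pos.mpr hxy
    have hsd : 0 < Real.sqrt d := Real.sqrt_pos.mpr hd0
    -- choose the splitting scale
    obtain ⟨M, hM1, hM2⟩ := exists_mem_Ico_zpow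
      (show (0:ℝ) < d * (4:ℝ) ^ i by positivity) (show (1:ℝ) < 4096 by norm_num)
    set n₁ : ℤ := -M with hn₁
    set J : ℤ := i + 6 * n₁ with hJdef
    have h4i : (4:ℝ) ^ (-i) * (4:ℝ) ^ i = 1 := by
      rw [← zpow_add₀ (by norm_num : (4:ℝ) ≠ 0)]
      simp
    have hscJ : sc J = (4:ℝ) ^ (-i) * (4096:ℝ) ^ M := by
      rw [sc, hJdef, neg_add, zpow_add₀ (by norm_num : (4:ℝ) ≠ 0)]
      congr 1
      have : -(6 * n₁) = 6 * M := by rw [hn₁]; ring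
      rw [this, zpow_mul]
      norm_num
    have hlow : sc J ≤ d := by
      have := mul_le_mul_of_nonneg_left hM1 (show (0:ℝ) ≤ (4:ℝ)^(-i) by positivity)
      calc sc J = (4:ℝ)^(-i) * (4096:ℝ)^M := hscJ
        _ ≤ (4:ℝ)^(-i) * (d * (4:ℝ)^i) := this
        _ = d * ((4:ℝ)^(-i) * (4:ℝ)^i) := by ring
        _ = d := by rw [h4i, mul_one]
    have hhigh : d < 4096 * sc J := by
      have h1 : d * (4:ℝ)^i < (4096:ℝ)^(M+1) := hM2
      have h2 : ((4096:ℝ))^(M+1) = 4096 * (4096:ℝ)^M := by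
        rw [zpow_add₀ (by norm_num : (4096:ℝ) ≠ 0)]
        ring
      have h3 := mul_lt_mul_of_pos_left (h2 ▸ h1)
        (show (0:ℝ) < (4:ℝ)^(-i) by positivity)
      calc d = d * ((4:ℝ)^(-i) * (4:ℝ)^i) := by rw [h4i, mul_one]
        _ = (4:ℝ)^(-i) * (d * (4:ℝ)^i) := by ring
        _ < (4:ℝ)^(-i) * (4096 * (4096:ℝ)^M) := h3
        _ = 4096 * sc J := by rw [hscJ]; ring
    -- key weight estimates
    have hwJ : wt J ≤ Real.sqrt d := by
      rw [← sqrt_sc]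
      exact Real.sqrt_le_sqrt hlow
    have hwJ2 : Real.sqrt d ≤ 64 * wt J := by
      have : Real.sqrt d ≤ Real.sqrt (4096 * sc J) := Real.sqrt_le_sqrt hhigh.le
      rwa [Real.sqrt_mul (by norm_num) , sqrt_sc,
        show Real.sqrt 4096 = 64 by
          rw [show (4096:ℝ) = 64^2 by norm_num, Real.sqrt_sq (by norm_num)]] at this
    -- apply the splitting lemma
    have hsplit := sum_split (a := fun n : ℤ => term A col (i + 6 * n) c x y) (n₀ := n₁)
      (A := Real.sqrt d / 64) (B := Real.sqrt d / 4)
      (q := 1/64) (by norm_num) (by norm_num)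
      (fun k => by
        have hidx : i + 6 * (n₁ + 1 + (k:ℤ)) = J + 6 * ((k:ℤ) + 1) := by
          rw [hJdef]; ring
        calc |term A col (i + 6 * (n₁ + 1 + (k:ℤ))) c x y|
            ≤ wt (i + 6 * (n₁ + 1 + (k:ℤ))) := term_bound1 A col _ c x y
          _ = wt J * (1/64)^(k+1) := by
              rw [hidx, show (J + 6 * ((k:ℤ) + 1)) = J + 6 * ((k+1 : ℕ) : ℤ) by push_cast; ring,
                wt_block_fwd]
          _ ≤ Real.sqrt d * (1/64)^(k+1) := by
              apply mul_le_mul_of_nonneg_right hwJ (by positivity)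
          _ = Real.sqrt d / 64 * (1/64)^k := by ring)
      (fun k => by
        have hidx : i + 6 * (n₁ - 1 - (k:ℤ)) = J - 6 * ((k:ℤ) + 1) := by
          rw [hJdef]; ring
        have hneg : -(J - 6 * ((k:ℤ)+1)) = -J + 6 * ((k+1:ℕ):ℤ) := by push_cast; ring
        calc |term A col (i + 6 * (n₁ - 1 - (k:ℤ))) c x y|
            ≤ d / 4 * wt (-(i + 6 * (n₁ - 1 - (k:ℤ)))) := term_bound2 A col _ c x y
          _ = d / 4 * (wt (-J) * (1/64)^(k+1)) := by
              rw [hidx, hneg, wt_block_fwd]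
          _ ≤ Real.sqrt d / 4 * (1/64)^k := by
              have hwne : wt (-J) = (wt J)⁻¹ :=
                (inv_eq_of_mul_eq_one_right (wt_mul_wt_neg J)).symm
              have hkey : d * wt (-J) ≤ 64 * Real.sqrt d := by
                rw [hwne, ← div_eq_mul_inv, div_le_iff₀ (wt_pos J)]
                have h1 : Real.sqrt d * Real.sqrt d ≤ Real.sqrt d * (64 * wt J) :=
                  mul_le_mul_of_nonneg_left hwJ2 hsd.le
                rw [Real.mul_self_sqrt hd0.le] at h1
                have h2 : Real.sqrt d * (64 * wt J) = 64 * Real.sqrt d * wt J := by ring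
                linarith
              have hq : (0:ℝ) ≤ (1/64:ℝ)^k := by positivity
              calc d / 4 * (wt (-J) * (1/64)^(k+1))
                  = d * wt (-J) * ((1/64)^k) / 256 := by ring
                _ ≤ 64 * Real.sqrt d * ((1/64)^k) / 256 := by
                    apply div_le_div_of_nonneg_right _ (by norm_num)
                    exact mul_le_mul_of_nonneg_right hkey hq
                _ = Real.sqrt d / 4 * (1/64)^k := by ring)
    obtain ⟨hsum, hbound⟩ := hsplit
    refine ⟨hsum, ?_⟩
    have hmain : |term A col (i + 6 * n₁) c x y| ≤ Real.sqrt d := by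
      calc |term A col (i + 6 * n₁) c x y| ≤ wt (i + 6 * n₁) := term_bound1 A col _ c x y
        _ = wt J := by rw [hJdef]
        _ ≤ Real.sqrt d := hwJ
    have htail : (Real.sqrt d / 64 + Real.sqrt d / 4) / (1 - 1/64) ≤ Real.sqrt d := by
      rw [div_le_iff₀ (by norm_num : (0:ℝ) < 1 - 1/64)]
      nlinarith [hsd.le]
    calc |∑' n : ℤ, term A col (i + 6 * n) c x y|
        ≤ |(∑' n : ℤ, term A col (i + 6 * n) c x y) - term A col (i + 6 * n₁) c x y|
          + |term A col (i + 6 * n₁) c x y| := by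
          have := abs_add_le ((∑' n : ℤ, term A col (i + 6 * n) c x y)
            - term A col (i + 6 * n₁) c x y) (term A col (i + 6 * n₁) c x y)
          simpa using this
      _ ≤ (Real.sqrt d / 64 + Real.sqrt d / 4) / (1 - 1/64) + Real.sqrt d :=
          add_le_add hbound hmain
      _ ≤ 2 * Real.sqrt d := by linarith [htail]

end Statement6Aux

namespace Statement6Aux

variable {X : Type*} [MetricSpace X] (A : ℤ → Set X) (col : ℤ → X → ℕ)

/-- Lower bound for the best block sum. -/
lemma block_lower
    (hnet : ∀ (j : ℤ) (x : X), ∃ a ∈ A j, dist x a ≤ sc j)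
    (hcolsep : ∀ j : ℤ, ∀ a ∈ A j, ∀ b ∈ A j, a ≠ b → col j a = col j b →
      25 * sc j < dist a b)
    (x y : X) (hxy : x ≠ y) :
    ∃ (i : ℤ) (c : ℕ), 0 ≤ i ∧ i < 6 ∧ (∃ (j' : ℤ) (a : X), c = col j' a) ∧
      Real.sqrt (dist x y) / 10 ≤ |∑' n : ℤ, term A col (i + 6 * n) c x y| := by
  set d := dist x y with hd
  have hd0 : 0 < d := dist_pos.mpr hxy
  have hsd : 0 < Real.sqrt d := Real.sqrt_pos.mpr hd0
  -- choose the dominating scale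
  obtain ⟨M, hM1, hM2⟩ := exists_mem_Ico_zpow
    (show (0:ℝ) < d / 5 by positivity) (show (1:ℝ) < 4 by norm_num)
  set j₀ : ℤ := -M with hj₀
  have hscj₀ : sc j₀ = (4:ℝ) ^ M := by rw [sc, hj₀, neg_neg]
  have hd1 : 5 * sc j₀ ≤ d := by
    rw [hscj₀]
    have := hM1
    linarith [hM1]
  have hd2 : d < 20 * sc j₀ := by
    have h2 : ((4:ℝ))^(M+1) = 4 * (4:ℝ)^M := by
      rw [zpow_add₀ (by norm_num : (4:ℝ) ≠ 0)]
      ring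
    have := hM2
    rw [h2] at this
    rw [hscj₀]
    linarith
  have hsc0 : 0 < sc j₀ := sc_pos j₀
  -- decompose j₀ into block and index
  set i : ℤ := j₀ % 6 with hi
  set n₀ : ℤ := j₀ / 6 with hn₀
  have hJ : i + 6 * n₀ = j₀ := by
    rw [hi, hn₀, add_comm]
    exact Int.mul_ediv_add_emod j₀ 6
  have hi0 : 0 ≤ i := Int.emod_nonneg j₀ (by norm_num)
  have hi6 : i < 6 := Int.emod_lt_of_pos j₀ (by norm_num)
  -- the dominating color
  obtain ⟨a, haA, hax⟩ := hnet j₀ x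
  set c : ℕ := col j₀ a with hc
  have haS : a ∈ sCl A col j₀ c := ⟨haA, rfl⟩
  have hSne : (sCl A col j₀ c).Nonempty := ⟨a, haS⟩
  -- lower bound on gg at x
  have hgx : 3/4 ≤ gg A col j₀ c x := by
    have h1 : Metric.infDist x (sCl A col j₀ c) ≤ sc j₀ :=
      le_trans (Metric.infDist_le_dist_of_mem haS) hax
    have h2 : Metric.infDist x (sCl A col j₀ c) / (4 * sc j₀) ≤ 1/4 := by
      rw [div_le_iff₀ (by linarith)]
      linarith
    refine le_trans ?_ (le_max_right _ _)
    linarith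
  -- gg vanishes at y
  have hgy : gg A col j₀ c y = 0 := by
    have hfar : ∀ a' ∈ sCl A col j₀ c, 4 * sc j₀ ≤ dist y a' := by
      rintro a' ⟨ha'A, ha'c⟩
      rcases eq_or_ne a' a with rfl | hne
      · have h3 : d ≤ dist x a' + dist a' y := dist_triangle x a' y
        have h4 : dist x a' ≤ sc j₀ := hax
        rw [dist_comm]
        linarith
      · have hsep := hcolsep j₀ a haA a' ha'A (fun h => hne h.symm) (by rw [← hc, ha'c])
        have htri : dist a a' ≤ dist a x + dist x y + dist y a' := by
          calc dist a a' ≤ dist a y + dist y a' := dist_triangle a y a'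
            _ ≤ (dist a x + dist x y) + dist y a' := by
                have := dist_triangle a x y
                linarith
        rw [dist_comm a x] at htri
        linarith
    have hle : 4 * sc j₀ ≤ Metric.infDist y (sCl A col j₀ c) := by
      by_contra hcon
      push_neg at hcon
      obtain ⟨a', ha', hda'⟩ := (Metric.infDist_lt_iff hSne).mp hcon
      exact absurd hda' (not_lt.mpr (hfar a' ha'))
    have : 1 - Metric.infDist y (sCl A col j₀ c) / (4 * sc j₀) ≤ 0 := by
      rw [sub_nonpos, le_div_iff₀ (by linarith)]
      linarith
    exact max_eq_left this
  -- the main term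
  have hmain : 3/4 * wt j₀ ≤ |term A col (i + 6 * n₀) c x y| := by
    rw [hJ, term, hgy, sub_zero, abs_mul, abs_of_pos (wt_pos j₀),
      abs_of_nonneg (gg_nonneg A col j₀ c x)]
    calc 3/4 * wt j₀ = wt j₀ * (3/4) := by ring
      _ ≤ wt j₀ * gg A col j₀ c x := mul_le_mul_of_nonneg_left hgx (wt_pos j₀).le
  -- tails
  have hsplit := sum_split (a := fun n : ℤ => term A col (i + 6 * n) c x y) (n₀ := n₀)
    (A := wt j₀ / 64) (B := 5 * wt j₀ / 64) (q := 1/64) (by norm_num) (by norm_num)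
    (fun k => by
      have hidx : i + 6 * (n₀ + 1 + (k:ℤ)) = j₀ + 6 * ((k+1:ℕ):ℤ) := by
        rw [← hJ]; push_cast; ring
      calc |term A col (i + 6 * (n₀ + 1 + (k:ℤ))) c x y|
          ≤ wt (i + 6 * (n₀ + 1 + (k:ℤ))) := term_bound1 A col _ c x y
        _ = wt j₀ * (1/64)^(k+1) := by rw [hidx, wt_block_fwd]
        _ ≤ wt j₀ / 64 * (1/64)^k := by
            rw [pow_succ]
            ring_nf
            exact le_refl _)
    (fun k => by
      have hidx : i + 6 * (n₀ - 1 - (k:ℤ)) = j₀ - 6 * ((k+1:ℕ):ℤ) := by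
        rw [← hJ]; push_cast; ring
      have hneg : -(j₀ - 6 * ((k+1:ℕ):ℤ)) = -j₀ + 6 * ((k+1:ℕ):ℤ) := by ring
      have hwtval : wt (-(j₀ - 6 * ((k+1:ℕ):ℤ))) = wt (-j₀) * (1/64)^(k+1) := by
        rw [hneg, wt_block_fwd]
      calc |term A col (i + 6 * (n₀ - 1 - (k:ℤ))) c x y|
          ≤ d / 4 * wt (-(i + 6 * (n₀ - 1 - (k:ℤ)))) := term_bound2 A col _ c x y
        _ = d / 4 * (wt (-j₀) * (1/64)^(k+1)) := by rw [hidx, hwtval]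
        _ ≤ 5 * wt j₀ / 64 * (1/64)^k := by
            have hkey : d * wt (-j₀) ≤ 20 * wt j₀ := by
              have h1 : d * wt (-j₀) ≤ 20 * sc j₀ * wt (-j₀) :=
                mul_le_mul_of_nonneg_right hd2.le (wt_pos _).le
              have h2 : sc j₀ * wt (-j₀) = wt j₀ := by
                rw [← wt_sq, sq, mul_assoc, wt_mul_wt_neg, mul_one]
              calc d * wt (-j₀) ≤ 20 * sc j₀ * wt (-j₀) := h1
                _ = 20 * wt j₀ := by rw [mul_assoc, h2]
            have hq : (0:ℝ) ≤ (1/64:ℝ)^k := by positivity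
            calc d / 4 * (wt (-j₀) * (1/64)^(k+1))
                = d * wt (-j₀) * (1/64)^k / 256 := by ring
              _ ≤ 20 * wt j₀ * (1/64)^k / 256 := by
                  apply div_le_div_of_nonneg_right _ (by norm_num)
                  exact mul_le_mul_of_nonneg_right hkey hq
              _ = 5 * wt j₀ / 64 * (1/64)^k := by ring)
  obtain ⟨hsum, hbound⟩ := hsplit
  refine ⟨i, c, hi0, hi6, ⟨j₀, a, hc⟩, ?_⟩
  have htail : (wt j₀ / 64 + 5 * wt j₀ / 64) / (1 - 1/64) ≤ wt j₀ / 8 := by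
    rw [div_le_iff₀ (by norm_num : (0:ℝ) < 1 - 1/64)]
    have := (wt_pos j₀).le
    nlinarith
  have hlow : wt j₀ / 2 ≤ |∑' n : ℤ, term A col (i + 6 * n) c x y| := by
    have habs := abs_sub_abs_le_abs_sub (term A col (i + 6 * n₀) c x y)
      ((term A col (i + 6 * n₀) c x y) - (∑' n : ℤ, term A col (i + 6 * n) c x y))
    have hsimp : term A col (i + 6 * n₀) c x y -
        (term A col (i + 6 * n₀) c x y - (∑' n : ℤ, term A col (i + 6 * n) c x y))
        = ∑' n : ℤ, term A col (i + 6 * n) c x y := by ring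
    rw [hsimp] at habs
    have hb2 : |term A col (i + 6 * n₀) c x y - (∑' n : ℤ, term A col (i + 6 * n) c x y)|
        ≤ wt j₀ / 8 := by
      rw [abs_sub_comm]
      exact le_trans hbound htail
    have hwtpos := (wt_pos j₀).le
    linarith
  -- convert `wt j₀` into `√d`
  have hwd : Real.sqrt d ≤ 5 * wt j₀ := by
    have h1 : d ≤ 25 * sc j₀ := by linarith
    have h2 : Real.sqrt d ≤ Real.sqrt (25 * sc j₀) := Real.sqrt_le_sqrt h1
    rwa [Real.sqrt_mul (by norm_num : (0:ℝ) ≤ 25), sqrt_sc,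
      show Real.sqrt 25 = 5 by
        rw [show (25:ℝ) = 5^2 by norm_num, Real.sqrt_sq (by norm_num)]] at h2
  calc Real.sqrt d / 10 ≤ wt j₀ / 2 := by linarith
    _ ≤ _ := hlow

end Statement6Aux

namespace Statement6Aux

noncomputable section

variable {X : Type*} [MetricSpace X]

/-- The Assouad-type embedding. -/
def fEmb (A : ℤ → Set X) (col : ℤ → X → ℕ) (K : ℕ) (x₀ : X) (x : X) :
    Fin 6 × Fin K → ℝ :=
  fun ic => ∑' n : ℤ, term A col ((ic.1 : ℕ) + 6 * n) (ic.2 : ℕ) x x₀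

variable (A : ℤ → Set X) (col : ℤ → X → ℕ) (K : ℕ) (x₀ : X)

lemma fEmb_sub (x y : X) (ic : Fin 6 × Fin K) :
    fEmb A col K x₀ x ic - fEmb A col K x₀ y ic
      = ∑' n : ℤ, term A col ((ic.1 : ℕ) + 6 * n) (ic.2 : ℕ) x y := by
  rw [fEmb, fEmb, ← Summable.tsum_sub (block_ub A col _ _ x x₀).1 (block_ub A col _ _ y x₀).1]
  apply tsum_congr
  intro n
  rw [term, term, term]
  ring

lemma fEmb_norm_ub (x y : X) :
    ‖fEmb A col K x₀ x - fEmb A col K x₀ y‖ ≤ 2 * Real.sqrt (dist x y) := by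
  rw [pi_norm_le_iff_of_nonneg (by positivity)]
  intro ic
  rw [Pi.sub_apply, Real.norm_eq_abs, fEmb_sub]
  exact (block_ub A col _ _ x y).2

lemma fEmb_norm_lb
    (hnet : ∀ (j : ℤ) (x : X), ∃ a ∈ A j, dist x a ≤ sc j)
    (hcolK : ∀ (j : ℤ) (z : X), col j z < K)
    (hcolsep : ∀ j : ℤ, ∀ a ∈ A j, ∀ b ∈ A j, a ≠ b → col j a = col j b →
      25 * sc j < dist a b)
    (x y : X) (hxy : x ≠ y) :
    Real.sqrt (dist x y) / 10 ≤ ‖fEmb A col K x₀ x - fEmb A col K x₀ y‖ := by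
  obtain ⟨i, c, hi0, hi6, ⟨j', a, hceq⟩, hge⟩ := block_lower A col hnet hcolsep x y hxy
  have hiN : i.toNat < 6 := by omega
  have hcK : c < K := hceq ▸ hcolK j' a
  set ic : Fin 6 × Fin K := (⟨i.toNat, hiN⟩, ⟨c, hcK⟩) with hic
  have hcast : ((ic.1 : ℕ) : ℤ) = i := by
    simp only [hic]
    exact Int.toNat_of_nonneg hi0
  calc Real.sqrt (dist x y) / 10
      ≤ |∑' n : ℤ, term A col (i + 6 * n) c x y| := hge
    _ = |fEmb A col K x₀ x ic - fEmb A col K x₀ y ic| := by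
        rw [fEmb_sub, hcast]
    _ = ‖(fEmb A col K x₀ x - fEmb A col K x₀ y) ic‖ := by
        rw [Pi.sub_apply, Real.norm_eq_abs]
    _ ≤ ‖fEmb A col K x₀ x - fEmb A col K x₀ y‖ := norm_le_pi_norm _ ic

end

end Statement6Aux

open Statement6Aux

/-- On a doubling metric space there exists a continuous quasi-distance, biLipschitz
equivalent to the original distance, satisfying BCP. -/
theorem statement6 {X : Type*} [MetricSpace X]
    (hdoub : IsDoubling (fun p q : X => dist p q)) :
    ∃ ρ : X → X → ℝ, IsQuasiDist ρ ∧
      Continuous (fun pq : X × X => ρ pq.1 pq.2) ∧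
      (∃ L : ℝ, 1 ≤ L ∧ ∀ x y, L⁻¹ * dist x y ≤ ρ x y ∧ ρ x y ≤ L * dist x y) ∧
      HasBCP ρ := by
  classical
  rcases isEmpty_or_nonempty X with hE | hNE
  · -- trivial case: `X` is empty
    refine ⟨fun _ _ => 0, ⟨fun p => isEmptyElim p, fun p => isEmptyElim p,
      fun p => isEmptyElim p, 1, le_refl _, fun p => isEmptyElim p⟩,
      continuous_const, ⟨1, le_refl _, fun x => isEmptyElim x⟩,
      1, le_refl _, fun A r hQB hr => ?_⟩
    obtain ⟨p, -⟩ := hQB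
    exact isEmptyElim p
  -- main case
  obtain ⟨C, hC1, hdb⟩ := hdoub
  have hdb' : ∀ (p : X) (r : ℝ), 0 < r →
      ∃ t : Finset X, t.card ≤ C ∧ QBall dist p (2 * r) ⊆ ⋃ x ∈ t, QBall dist x r := hdb
  have x₀ : X := Classical.arbitrary X
  set K : ℕ := C ^ 6 with hKdef
  have hdata : ∀ j : ℤ, ∃ (M : Set X) (cl : X → ℕ),
      (∀ x, ∃ a ∈ M, dist x a ≤ sc j) ∧ (∀ x, cl x < K) ∧
      (∀ a ∈ M, ∀ b ∈ M, a ≠ b → cl a = cl b → 25 * sc j < dist a b) := fun j => by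
    obtain ⟨M, cl, h1, h2, h3⟩ := Test2.exists_net_coloring hC1 hdb' x₀ (sc j) (sc_pos j)
    exact ⟨M, cl, h1, h2, h3⟩
  choose A colf hnet hcolK hcolsep using hdata
  set f : X → (Fin 6 × Fin K → ℝ) := fEmb A colf K x₀ with hf
  have hub : ∀ x y, ‖f x - f y‖ ≤ 2 * Real.sqrt (dist x y) :=
    fun x y => fEmb_norm_ub A colf K x₀ x y
  have hlb : ∀ x y, x ≠ y → Real.sqrt (dist x y) / 10 ≤ ‖f x - f y‖ :=
    fun x y h => fEmb_norm_lb A colf K x₀ hnet (fun j z => hcolK j z) hcolsep x y h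
  set ρ : X → X → ℝ := fun x y => ‖f x - f y‖ ^ 2 with hρ
  have hρ_nonneg : ∀ x y, 0 ≤ ρ x y := fun x y => by positivity
  have hρ_symm : ∀ x y, ρ x y = ρ y x := fun x y => by
    simp only [hρ, norm_sub_rev]
  have hρ_ub : ∀ x y, ρ x y ≤ 4 * dist x y := by
    intro x y
    have h1 : ‖f x - f y‖ ^ 2 ≤ (2 * Real.sqrt (dist x y)) ^ 2 := by
      apply pow_le_pow_left₀ (norm_nonneg _) (hub x y)
    have h2 : (2 * Real.sqrt (dist x y)) ^ 2 = 4 * dist x y := by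
      rw [mul_pow, Real.sq_sqrt dist_nonneg]
      norm_num
    calc ρ x y = ‖f x - f y‖ ^ 2 := rfl
      _ ≤ (2 * Real.sqrt (dist x y)) ^ 2 := h1
      _ = 4 * dist x y := h2
  have hρ_lb : ∀ x y, dist x y / 100 ≤ ρ x y := by
    intro x y
    rcases eq_or_ne x y with rfl | hxy
    · simp [hρ_nonneg x x]
    · have h1 : (Real.sqrt (dist x y) / 10) ^ 2 ≤ ‖f x - f y‖ ^ 2 :=
        pow_le_pow_left₀ (by positivity) (hlb x y hxy) 2
      have h2 : (Real.sqrt (dist x y) / 10) ^ 2 = dist x y / 100 := by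
        rw [div_pow, Real.sq_sqrt dist_nonneg]
        norm_num
      rw [← h2]
      exact h1
  have hρ_zero : ∀ x y, ρ x y = 0 ↔ x = y := by
    intro x y
    constructor
    · intro h
      by_contra hxy
      have := hρ_lb x y
      rw [h] at this
      have hd0 : 0 < dist x y := dist_pos.mpr hxy
      linarith
    · rintro rfl
      show ‖f x - f x‖ ^ 2 = 0
      rw [sub_self, norm_zero]
      norm_num
  have hρ_tri : ∀ u v w : X, ρ u w ≤ 2 * (ρ u v + ρ v w) := by
    intro u v w
    have h1 : ‖f u - f w‖ ≤ ‖f u - f v‖ + ‖f v - f w‖ := by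
      have : f u - f w = (f u - f v) + (f v - f w) := by abel
      rw [this]
      exact norm_add_le _ _
    have h2 : (0:ℝ) ≤ ‖f u - f v‖ := norm_nonneg _
    have h3 : (0:ℝ) ≤ ‖f v - f w‖ := norm_nonneg _
    have h4 : (0:ℝ) ≤ ‖f u - f w‖ := norm_nonneg _
    simp only [hρ]
    nlinarith [sq_nonneg (‖f u - f v‖ - ‖f v - f w‖)]
  have hfcont : Continuous f := by
    rw [Metric.continuous_iff]
    intro x ε hε
    refine ⟨(ε/2)^2, by positivity, fun y hy => ?_⟩
    have h1 : dist (f y) (f x) = ‖f y - f x‖ := dist_eq_norm _ _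
    have h2 : ‖f y - f x‖ ≤ 2 * Real.sqrt (dist y x) := hub y x
    have h3 : Real.sqrt (dist y x) < Real.sqrt ((ε/2)^2) :=
      Real.sqrt_lt_sqrt dist_nonneg hy
    rw [Real.sqrt_sq (by positivity : (0:ℝ) ≤ ε/2)] at h3
    rw [h1]
    linarith
  refine ⟨ρ, ⟨hρ_nonneg, hρ_symm, hρ_zero, 2, by norm_num, fun p p' q => by
      have := hρ_tri p p' q
      linarith⟩, ?_, ⟨100, by norm_num, fun x y => ⟨?_, ?_⟩⟩, ?_⟩
  · -- continuity
    have : (fun pq : X × X => ρ pq.1 pq.2)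
        = fun pq : X × X => ‖f pq.1 - f pq.2‖ ^ 2 := rfl
    rw [this]
    exact (((hfcont.comp continuous_fst).sub (hfcont.comp continuous_snd)).norm).pow 2
  · -- lower biLipschitz
    have := hρ_lb x y
    rw [inv_mul_eq_div]
    linarith [this]
  · -- upper biLipschitz
    have := hρ_ub x y
    have hd := dist_nonneg (x := x) (y := y)
    linarith
  · -- BCP
    obtain ⟨N, τ, hτ, hNem⟩ :=
      HasBesicovitchCovering.no_satelliteConfig (α := Fin 6 × Fin K → ℝ)
    refine ⟨max N 1, le_max_right _ _, ?_⟩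
    intro Aset rad hQB hrad
    obtain ⟨p, R, hR, hAb⟩ := hQB
    by_cases hbig : ∃ a ∈ Aset, 4 * R ≤ rad a
    · obtain ⟨a, haA, hra⟩ := hbig
      refine ⟨{a}, by simpa using haA, Set.countable_singleton a, ?_, ?_⟩
      · intro y hy
        refine ⟨a, Set.mem_singleton a, ?_⟩
        have h1 : ρ y p ≤ R := hAb hy
        have h2 : ρ a p ≤ R := hAb haA
        have h3 : ρ y a ≤ 2 * (ρ y p + ρ p a) := hρ_tri y p a
        rw [hρ_symm p a] at h3
        show ρ y a ≤ rad a
        linarith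
      · intro y
        calc ({x ∈ ({a} : Set X) | y ∈ QBall ρ x (rad x)}).encard
            ≤ ({a} : Set X).encard := Set.encard_mono (Set.sep_subset _ _)
          _ = 1 := Set.encard_singleton a
          _ ≤ ((max N 1 : ℕ) : ℕ∞) := by
              have h1 : ((1:ℕ) : ℕ∞) ≤ ((max N 1 : ℕ) : ℕ∞) :=
                Nat.cast_le.mpr (le_max_right _ _)
              simpa using h1
    · push_neg at hbig
      rcases Set.eq_empty_or_nonempty Aset with rfl | hAne
      · refine ⟨∅, Set.Subset.rfl, Set.countable_empty, fun a ha => absurd ha (by simp), ?_⟩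
        intro y
        have : {x ∈ (∅ : Set X) | y ∈ QBall ρ x (rad x)} = ∅ := by
          ext z; simp
        rw [this, Set.encard_empty]
        exact zero_le
      · set pkg : Besicovitch.BallPackage ↥Aset (Fin 6 × Fin K → ℝ) :=
          { c := fun a => f a
            r := fun a => Real.sqrt (rad a)
            rpos := fun a => Real.sqrt_pos.mpr (hrad a a.2)
            r_bound := Real.sqrt (4 * R)
            r_le := fun a => Real.sqrt_le_sqrt (hbig a a.2).le } with hpkg
        obtain ⟨s, hdisj, hcov⟩ :=
          Besicovitch.exist_disjoint_covering_families hτ hNem pkg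
        set F : Set X := Subtype.val '' (⋃ i, s i) with hF
        have hFsub : F ⊆ Aset := by
          rintro x ⟨j, -, rfl⟩
          exact j.2
        have hFcount : F.Countable := by
          apply Set.Countable.image
          apply Set.countable_iUnion
          intro i
          apply Set.PairwiseDisjoint.countable_of_isOpen
            (s := fun j : ↥Aset => Metric.ball (pkg.c j) (pkg.r j))
          · exact (hdisj i).mono (fun j => Metric.ball_subset_closedBall)
          · exact fun j _ => Metric.isOpen_ball
          · exact fun j _ => Metric.nonempty_ball.mpr (pkg.rpos j)
        have hradsqrt : ∀ x ∈ F, Real.sqrt (rad x) ^ 2 = rad x :=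
          fun x hx => Real.sq_sqrt (hrad x (hFsub hx)).le
        refine ⟨F, hFsub, hFcount, ?_, ?_⟩
        · -- covering
          intro a ha
          have hmem : pkg.c ⟨a, ha⟩ ∈
              ⋃ i : Fin N, ⋃ j ∈ s i, Metric.ball (pkg.c j) (pkg.r j) :=
            hcov (Set.mem_range_self _)
          simp only [Set.mem_iUnion] at hmem
          obtain ⟨i, j, hjs, hjb⟩ := hmem
          refine ⟨(j : X), ⟨j, Set.mem_iUnion.mpr ⟨i, hjs⟩, rfl⟩, ?_⟩
          have hdist : ‖f a - f (j : X)‖ < Real.sqrt (rad (j : X)) := by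
            have := Metric.mem_ball.mp hjb
            rwa [dist_eq_norm] at this
          show ρ a (j : X) ≤ rad (j : X)
          have h2 : ‖f a - f (j : X)‖ ^ 2 ≤ Real.sqrt (rad (j : X)) ^ 2 :=
            pow_le_pow_left₀ (norm_nonneg _) hdist.le 2
          rw [Real.sq_sqrt (hrad _ j.2).le] at h2
          exact h2
        · -- multiplicity
          intro y
          set T := {x ∈ F | y ∈ QBall ρ x (rad x)} with hT
          rcases Set.eq_empty_or_nonempty T with hTe | hTne
          · rw [hTe, Set.encard_empty]
            exact zero_le
          obtain ⟨x₁, hx₁⟩ := hTne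
          obtain ⟨j₁, hj₁u, -⟩ := hx₁.1
          obtain ⟨i₁, hi₁⟩ := Set.mem_iUnion.mp hj₁u
          have hball : ∀ x ∈ T, Metric.closedBall (f x) (Real.sqrt (rad x)) ∈
              {B : Set (Fin 6 × Fin K → ℝ) | f y ∈ B} := by
            intro x hx
            have h1 : ρ y x ≤ rad x := hx.2
            have h2 : ‖f y - f x‖ ≤ Real.sqrt (rad x) := by
              rw [← Real.sqrt_sq (norm_nonneg (f y - f x))]
              exact Real.sqrt_le_sqrt h1
            simp only [Set.mem_setOf_eq, Metric.mem_closedBall, dist_eq_norm]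
            exact h2
          set φ : X → Fin N := fun x =>
            if h : ∃ i : Fin N, ∃ j ∈ s i, (j : X) = x then h.choose else i₁ with hφ
          have hφspec : ∀ x ∈ T, ∃ j ∈ s (φ x), (j : X) = x := by
            intro x hx
            obtain ⟨j, hju, hjx⟩ := hx.1
            obtain ⟨i, hi⟩ := Set.mem_iUnion.mp hju
            have hex : ∃ i : Fin N, ∃ j ∈ s i, (j : X) = x := ⟨i, j, hi, hjx⟩
            simp only [hφ, dif_pos hex]
            exact hex.choose_spec
          have hφinj : Set.InjOn φ T := by
            intro x hx x' hx' hφeq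
            by_contra hne
            obtain ⟨j, hjs, hjx⟩ := hφspec x hx
            obtain ⟨j', hj's, hj'x⟩ := hφspec x' hx'
            rw [hφeq] at hjs
            have hjj' : j ≠ j' := by
              intro h
              apply hne
              rw [← hjx, ← hj'x, h]
            have hdisj' := hdisj (φ x') hjs hj's hjj'
            have hy1 : f y ∈ Metric.closedBall (pkg.c j) (pkg.r j) := by
              have := hball x hx
              simp only [Set.mem_setOf_eq] at this
              show f y ∈ Metric.closedBall (f (j:X)) (Real.sqrt (rad (j:X)))
              rw [hjx]
              exact this
            have hy2 : f y ∈ Metric.closedBall (pkg.c j') (pkg.r j') := by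
              have := hball x' hx'
              simp only [Set.mem_setOf_eq] at this
              show f y ∈ Metric.closedBall (f (j':X)) (Real.sqrt (rad (j':X)))
              rw [hj'x]
              exact this
            exact Set.disjoint_left.mp hdisj' hy1 hy2
          calc T.encard = (φ '' T).encard := (hφinj.encard_image).symm
            _ ≤ (Set.univ : Set (Fin N)).encard := Set.encard_mono (Set.subset_univ _)
            _ = (N : ℕ∞) := by
                rw [Set.encard_univ]
                simp
            _ ≤ ((max N 1 : ℕ) : ℕ∞) := Nat.cast_le.mpr (le_max_left N 1)
end

section
/- Let (X,d) and (X_∞,d_∞) be metric spaces. Assume there exist a sequence (λ_i) of positive reals with λ_i → 0 as i → ∞ and maps φ_i : X_∞ → X such that for all x, y ∈ X_∞ one has (1/λ_i)·d(φ_i(x),φ_i(y)) → d_∞(x,y) as i → ∞. If d is finite dimensional on X (for some constants C* ∈ [1,∞) and r* ∈ (0,∞]), then d_∞ is finite dimensional on X_∞ (with the same constant C*, for radii < r*). -/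
open scoped ENNReal

/-- `d` is finite dimensional on `Y` with constants `Cs ∈ [1,∞)` and `rs ∈ (0,∞]`:
every family of Besicovitch balls with centers in `Y` and radii `< rs` has cardinality
at most `Cs`. -/
def FiniteDimOn {X : Type*} (d : X → X → ℝ) (Y : Set X) (Cs : ℝ) (rs : ℝ≥0∞) : Prop :=
  ∀ (s : Finset X) (r : X → ℝ), IsBesicovitchFamily d s r → (↑s : Set X) ⊆ Y →
    (∀ x ∈ s, ENNReal.ofReal (r x) < rs) → (s.card : ℝ) ≤ Cs

/-- If `(Xinf, d∞)` arises as a limit of rescalings of `(X, d)` via maps `φ i : Xinf → X` with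
scales `λ i → 0`, and `d` is finite dimensional on `X` with constants `C*` and `r*`, then
`d∞` is finite dimensional on `Xinf` with the same constants. -/
theorem statement7 {X Xinf : Type*} [MetricSpace X] [MetricSpace Xinf]
    (lam : ℕ → ℝ) (hlam : ∀ i, 0 < lam i)
    (hlim : Filter.Tendsto lam Filter.atTop (nhds 0))
    (φ : ℕ → Xinf → X)
    (hconv : ∀ x y : Xinf,
      Filter.Tendsto (fun i => (1 / lam i) * dist (φ i x) (φ i y))
        Filter.atTop (nhds (dist x y)))
    (Cs : ℝ) (hCs : 1 ≤ Cs) (rs : ℝ≥0∞) (hrs : 0 < rs)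
    (h : FiniteDimOn (fun p q : X => dist p q) Set.univ Cs rs) :
    FiniteDimOn (fun p q : Xinf => dist p q) Set.univ Cs rs := by
  classical
  intro s r hfam _ hrad
  obtain ⟨hrpos, hsep, z, hz⟩ := hfam
  by_cases hcard : s.card ≤ 1
  · calc (s.card : ℝ) ≤ 1 := by exact_mod_cast hcard
      _ ≤ Cs := hCs
  push_neg at hcard
  have hsne : s.Nonempty := Finset.card_pos.1 (by omega)
  haveI : Nonempty Xinf := ⟨hsne.choose⟩
  have hod : s.offDiag.Nonempty := by
    obtain ⟨a, ha, b, hb, hab⟩ := Finset.one_lt_card.1 hcard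
    exact ⟨(a, b), Finset.mem_offDiag.2 ⟨ha, hb, hab⟩⟩
  set δ : ℝ := (s.offDiag.inf' hod fun p => dist p.1 p.2 - r p.2) / 2 with hδdef
  have hgap : ∀ p ∈ s.offDiag, 0 < dist p.1 p.2 - r p.2 := by
    rintro ⟨x, y⟩ hxy
    rw [Finset.mem_offDiag] at hxy
    have := hsep x hxy.1 y hxy.2.1 hxy.2.2
    simp only [QBall, Set.mem_setOf_eq, not_le] at this
    linarith
  have hδpos : 0 < δ := by
    apply div_pos _ two_pos
    rw [Finset.lt_inf'_iff]
    exact hgap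
  -- eventual separation
  have hEsep : ∀ᶠ i in Filter.atTop, ∀ p ∈ s.offDiag,
      lam i * (r p.2 + δ) < dist (φ i p.1) (φ i p.2) := by
    rw [Filter.eventually_all_finset]
    rintro ⟨x, y⟩ hxy
    have hlt : r y + δ < dist x y := by
      have h1 := Finset.inf'_le (fun p : Xinf × Xinf => dist p.1 p.2 - r p.2) hxy
      simp only at h1
      have h3 := hgap (x, y) hxy
      simp only at h3
      have h4 : δ ≤ (dist x y - r y) / 2 := by rw [hδdef]; linarith
      linarith
    have := (hconv x y).eventually_const_lt hlt
    filter_upwards [this] with i hi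
    have h2 := (mul_lt_mul_iff_right₀ (hlam i)).2 hi
    rw [← mul_assoc, mul_one_div_cancel (hlam i).ne', one_mul] at h2
    exact h2
  -- eventual intersection
  have hEint : ∀ᶠ i in Filter.atTop, ∀ x ∈ s,
      dist (φ i z) (φ i x) ≤ lam i * (r x + δ) := by
    rw [Filter.eventually_all_finset]
    intro x hx
    have hlt : dist z x < r x + δ := by
      have := hz x hx
      simp only [QBall, Set.mem_setOf_eq] at this
      linarith
    have := (hconv z x).eventually_lt_const hlt
    filter_upwards [this] with i hi
    have h2 := (mul_lt_mul_iff_right₀ (hlam i)).2 hi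
    rw [← mul_assoc, mul_one_div_cancel (hlam i).ne', one_mul] at h2
    exact h2.le
  -- eventual radii bound
  have hErad : ∀ᶠ i in Filter.atTop, ∀ x ∈ s,
      ENNReal.ofReal (lam i * (r x + δ)) < rs := by
    rw [Filter.eventually_all_finset]
    intro x _
    have h1 : Filter.Tendsto (fun i => lam i * (r x + δ)) Filter.atTop (nhds 0) := by
      simpa using hlim.mul_const (r x + δ)
    have h2 : Filter.Tendsto (fun i => ENNReal.ofReal (lam i * (r x + δ)))
        Filter.atTop (nhds 0) := by
      have := (ENNReal.continuous_ofReal.tendsto 0).comp h1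
      simpa using (by exact this : Filter.Tendsto (fun i => ENNReal.ofReal (lam i * (r x + δ))) Filter.atTop (nhds (ENNReal.ofReal 0)))
    exact h2.eventually_lt_const hrs
  obtain ⟨i, hi1, hi2, hi3⟩ := (hEsep.and (hEint.and hErad)).exists
  -- injectivity of φ i on s
  have hinj : Set.InjOn (φ i) ↑s := by
    intro x hx y hy hxy
    by_contra hne
    have hmem : (x, y) ∈ s.offDiag := Finset.mem_offDiag.2 ⟨hx, hy, hne⟩
    have h1 := hi1 (x, y) hmem
    simp only at h1
    rw [hxy, dist_self] at h1
    have h2 : 0 < lam i * (r y + δ) :=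
      mul_pos (hlam i) (by have := hrpos y hy; linarith)
    linarith
  set g : X → Xinf := Function.invFunOn (φ i) ↑s with hg
  have hginv : ∀ x ∈ s, g (φ i x) = x := fun x hx =>
    hinj.leftInvOn_invFunOn hx
  set t : Finset X := s.image (φ i) with ht
  have hcard_eq : t.card = s.card := Finset.card_image_of_injOn hinj
  have hfam' : IsBesicovitchFamily (fun p q : X => dist p q) t
      (fun p => lam i * (r (g p) + δ)) := by
    refine ⟨?_, ?_, ⟨φ i z, ?_⟩⟩
    · intro p hp
      obtain ⟨x, hx, rfl⟩ := Finset.mem_image.1 hp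
      simp only [hginv x hx]
      exact mul_pos (hlam i) (by have := hrpos x hx; linarith)
    · intro p hp q hq hpq
      obtain ⟨x, hx, rfl⟩ := Finset.mem_image.1 hp
      obtain ⟨y, hy, rfl⟩ := Finset.mem_image.1 hq
      have hne : x ≠ y := fun hxy => hpq (by rw [hxy])
      have hmem : (x, y) ∈ s.offDiag := Finset.mem_offDiag.2 ⟨hx, hy, hne⟩
      have h1 := hi1 (x, y) hmem
      simp only [QBall, Set.mem_setOf_eq, not_le, hginv y hy]
      exact h1
    · intro p hp
      obtain ⟨x, hx, rfl⟩ := Finset.mem_image.1 hp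
      simp only [QBall, Set.mem_setOf_eq, hginv x hx]
      exact hi2 x hx
  have hrad' : ∀ p ∈ t, ENNReal.ofReal (lam i * (r (g p) + δ)) < rs := by
    intro p hp
    obtain ⟨x, hx, rfl⟩ := Finset.mem_image.1 hp
    rw [hginv x hx]
    exact hi3 x hx
  have := h t (fun p => lam i * (r (g p) + δ)) hfam' (Set.subset_univ _) hrad'
  rw [hcard_eq] at this
  exact this
end

section
/- Let 𝔤 be a nonzero finite-dimensional real Lie algebra with a positive grading (V_t)_{t>0} that has commuting different layers, i.e., ⁅V_t,V_s⁆ = 0 for all t, s > 0 with t ≠ s. Let t₁ be the smallest t > 0 with V_t ≠ {0}. Then 𝔥 := V_{t₁} + ⁅V_{t₁},V_{t₁}⁆ is a Lie ideal of 𝔤 satisfying ⁅𝔥,⁅𝔥,𝔥⁆⁆ = 0 (so 𝔥 is nilpotent of step at most 2), and there exists a Lie ideal 𝔥' of 𝔤 such that 𝔤 = 𝔥 ⊕ 𝔥' (internal direct sum of subspaces). -/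
/-- For subspaces `V, W` of a Lie algebra, the linear span of brackets `⁅x,y⁆`, `x ∈ V`,
`y ∈ W`. -/
def bracketSpan {L : Type*} [LieRing L] [LieAlgebra ℝ L] (V W : Submodule ℝ L) :
    Submodule ℝ L :=
  Submodule.span ℝ (Set.image2 (fun x y => ⁅x, y⁆) (V : Set L) (W : Set L))

/-- Let `𝔤` be a nonzero finite-dimensional real Lie algebra with a positive grading
`(V t)_{t>0}` with commuting different layers, and let `t₁` be the smallest `t > 0` with
`V t ≠ ⊥`. Then `𝔥 := V t₁ ⊔ ⁅V t₁, V t₁⁆` is a Lie ideal with `⁅𝔥,⁅𝔥,𝔥⁆⁆ = 0` and it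
admits a complementary Lie ideal `𝔥'`. -/
theorem statement9 {L : Type*} [LieRing L] [LieAlgebra ℝ L] [Module.Finite ℝ L]
    [Nontrivial L]
    (V : ℝ → Submodule ℝ L)
    (hfin : {t : ℝ | 0 < t ∧ V t ≠ ⊥}.Finite)
    (hspan : (⨆ t : {t : ℝ // 0 < t}, V t) = ⊤)
    (hindep : iSupIndep (fun t : {t : ℝ // 0 < t} => V t))
    (hgrad : ∀ s t : ℝ, 0 < s → 0 < t → ∀ x ∈ V s, ∀ y ∈ V t, ⁅x, y⁆ ∈ V (s + t))
    (hcomm : ∀ s t : ℝ, 0 < s → 0 < t → s ≠ t → ∀ x ∈ V s, ∀ y ∈ V t, ⁅x, y⁆ = 0)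
    (t₁ : ℝ) (ht₁pos : 0 < t₁) (ht₁ne : V t₁ ≠ ⊥)
    (ht₁min : ∀ t : ℝ, 0 < t → V t ≠ ⊥ → t₁ ≤ t) :
    (∀ x : L, ∀ y ∈ V t₁ ⊔ bracketSpan (V t₁) (V t₁),
        ⁅x, y⁆ ∈ V t₁ ⊔ bracketSpan (V t₁) (V t₁)) ∧
    (∀ x ∈ V t₁ ⊔ bracketSpan (V t₁) (V t₁),
      ∀ y ∈ V t₁ ⊔ bracketSpan (V t₁) (V t₁),
      ∀ z ∈ V t₁ ⊔ bracketSpan (V t₁) (V t₁), ⁅x, ⁅y, z⁆⁆ = 0) ∧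
    ∃ 𝔥' : Submodule ℝ L,
      (∀ x : L, ∀ y ∈ 𝔥', ⁅x, y⁆ ∈ 𝔥') ∧
      (V t₁ ⊔ bracketSpan (V t₁) (V t₁)) ⊔ 𝔥' = ⊤ ∧
      (V t₁ ⊔ bracketSpan (V t₁) (V t₁)) ⊓ 𝔥' = ⊥ := by
  set B := bracketSpan (V t₁) (V t₁) with hBdef
  have h2pos : 0 < 2 * t₁ := by positivity
  have h2ne : (2 : ℝ) * t₁ ≠ t₁ := by nlinarith
  have hBle : B ≤ V (2 * t₁) := by
    rw [hBdef, bracketSpan, Submodule.span_le]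
    rintro _ ⟨u, hu, v, hv, rfl⟩
    have := hgrad t₁ t₁ ht₁pos ht₁pos u hu v hv
    simpa [two_mul] using this
  -- B is central in each layer, hence in L
  have hcent' : ∀ s : ℝ, 0 < s → ∀ x ∈ V s, ∀ y ∈ B, ⁅x, y⁆ = 0 := by
    intro s hs x hx y hy
    by_cases hseq : s = 2 * t₁
    · rw [hBdef, bracketSpan] at hy
      induction hy using Submodule.span_induction with
      | mem w hw =>
        obtain ⟨u, hu, v, hv, rfl⟩ := hw
        have hxu : ⁅x, u⁆ = 0 := hcomm s t₁ hs ht₁pos (hseq ▸ h2ne) x hx u hu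
        have hxv : ⁅x, v⁆ = 0 := hcomm s t₁ hs ht₁pos (hseq ▸ h2ne) x hx v hv
        simp only [leibniz_lie, hxu, hxv, zero_lie, lie_zero, add_zero]
      | zero => simp
      | add a b _ _ ha hb => rw [lie_add, ha, hb, add_zero]
      | smul c a _ ha => rw [lie_smul, ha, smul_zero]
    · exact hcomm s (2 * t₁) hs h2pos hseq x hx y (hBle hy)
  have hcent : ∀ x : L, ∀ y ∈ B, ⁅x, y⁆ = 0 := by
    intro x y hy
    let K : Submodule ℝ L :=
      { carrier := {x : L | ∀ y ∈ B, ⁅x, y⁆ = 0}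
        add_mem' := fun {a b} ha hb z hz => by rw [add_lie, ha z hz, hb z hz, add_zero]
        zero_mem' := fun z hz => by simp
        smul_mem' := fun c a ha z hz => by rw [smul_lie, ha z hz, smul_zero] }
    have hKtop : (⊤ : Submodule ℝ L) ≤ K := by
      rw [← hspan]
      exact iSup_le fun t a ha => hcent' t.1 t.2 a ha
    exact hKtop (Submodule.mem_top) y hy
  -- 𝔥 is an ideal
  have hideal : ∀ x : L, ∀ y ∈ V t₁ ⊔ B, ⁅x, y⁆ ∈ V t₁ ⊔ B := by
    intro x y hy
    obtain ⟨a, ha, b, hb, rfl⟩ := Submodule.mem_sup.mp hy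
    rw [lie_add, hcent x b hb, add_zero]
    -- reduce to x in a layer
    let K : Submodule ℝ L :=
      { carrier := {x : L | ∀ a ∈ V t₁, ⁅x, a⁆ ∈ V t₁ ⊔ B}
        add_mem' := fun {p q} hp hq z hz => by
          rw [add_lie]; exact Submodule.add_mem _ (hp z hz) (hq z hz)
        zero_mem' := fun z hz => by simp
        smul_mem' := fun c p hp z hz => by
          rw [smul_lie]; exact Submodule.smul_mem _ _ (hp z hz) }
    have hKtop : (⊤ : Submodule ℝ L) ≤ K := by
      rw [← hspan]
      refine iSup_le fun t p hp z hz => ?_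
      by_cases hteq : (t : ℝ) = t₁
      · refine Submodule.mem_sup_right ?_
        rw [hBdef, bracketSpan]
        exact Submodule.subset_span ⟨p, hteq ▸ hp, z, hz, rfl⟩
      · rw [hcomm t t₁ t.2 ht₁pos hteq p hp z hz]
        exact Submodule.zero_mem _
    exact hKtop Submodule.mem_top a ha
  refine ⟨hideal, ?_, ?_⟩
  · -- step 2 nilpotency
    intro x hx y hy z hz
    have hyz : ⁅y, z⁆ ∈ B := by
      obtain ⟨a, ha, b, hb, rfl⟩ := Submodule.mem_sup.mp hy
      obtain ⟨a', ha', b', hb', rfl⟩ := Submodule.mem_sup.mp hz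
      have h1 : ⁅a, b'⁆ = 0 := hcent a b' hb'
      have h2 : ⁅b, a'⁆ = 0 := by
        rw [← lie_skew, hcent a' b hb, neg_zero]
      have h3 : ⁅b, b'⁆ = 0 := hcent b b' hb'
      rw [add_lie, lie_add, lie_add, h1, h2, h3, add_zero, add_zero, add_zero]
      rw [hBdef, bracketSpan]
      exact Submodule.subset_span ⟨a, ha, a', ha', rfl⟩
    exact hcent x _ hyz
  · -- complement
    obtain ⟨W', hW'⟩ := Submodule.exists_isCompl (Submodule.comap (V (2 * t₁)).subtype B)
    set W : Submodule ℝ L := W'.map (V (2 * t₁)).subtype with hWdef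
    have hWle : W ≤ V (2 * t₁) := Submodule.map_subtype_le _ _
    have hBWsup : B ⊔ W = V (2 * t₁) := by
      have := congrArg (Submodule.map (V (2 * t₁)).subtype) hW'.sup_eq_top
      rwa [Submodule.map_sup, Submodule.map_comap_subtype, Submodule.map_top,
        Submodule.range_subtype, inf_eq_right.mpr hBle] at this
    have hBWinf : B ⊓ W = ⊥ := by
      have := congrArg (Submodule.map (V (2 * t₁)).subtype) hW'.inf_eq_bot
      rwa [Submodule.map_inf _ (V (2 * t₁)).injective_subtype, Submodule.map_comap_subtype,
        Submodule.map_bot, inf_eq_right.mpr hBle] at this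
    set S : Submodule ℝ L :=
      ⨆ t : {t : ℝ // 0 < t ∧ t ≠ t₁ ∧ t ≠ 2 * t₁}, V t with hSdef
    have hVleS : ∀ t : ℝ, 0 < t → t ≠ t₁ → t ≠ 2 * t₁ → V t ≤ S := by
      intro t ht h1 h2
      exact le_iSup (fun t : {t : ℝ // 0 < t ∧ t ≠ t₁ ∧ t ≠ 2 * t₁} => V t) ⟨t, ht, h1, h2⟩
    refine ⟨W ⊔ S, ?_, ?_, ?_⟩
    · -- ideal
      intro x y hy
      let K : Submodule ℝ L :=
        { carrier := {x : L | ∀ y ∈ W ⊔ S, ⁅x, y⁆ ∈ W ⊔ S}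
          add_mem' := fun {p q} hp hq z hz => by
            rw [add_lie]; exact Submodule.add_mem _ (hp z hz) (hq z hz)
          zero_mem' := fun z hz => by simp
          smul_mem' := fun c p hp z hz => by
            rw [smul_lie]; exact Submodule.smul_mem _ _ (hp z hz) }
      have hKtop : (⊤ : Submodule ℝ L) ≤ K := by
        rw [← hspan]
        refine iSup_le fun t p hp => ?_
        -- fixed p ∈ V t, vary y over W ⊔ S
        let J : Submodule ℝ L :=
          { carrier := {y : L | ⁅p, y⁆ ∈ W ⊔ S}
            add_mem' := fun {u v} hu hv => by
              simp only [Set.mem_setOf_eq, lie_add]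
              exact Submodule.add_mem _ hu hv
            zero_mem' := by simp
            smul_mem' := fun c u hu => by
              simp only [Set.mem_setOf_eq, lie_smul]
              exact Submodule.smul_mem _ _ hu }
        have hWJ : W ≤ J := by
          intro w hw
          by_cases hteq : (t : ℝ) = 2 * t₁
          · have hmem : ⁅p, w⁆ ∈ V (2 * t₁ + 2 * t₁) :=
              hgrad (2 * t₁) (2 * t₁) h2pos h2pos p (hteq ▸ hp) w (hWle hw)
            have h4pos : (0:ℝ) < 2 * t₁ + 2 * t₁ := by positivity
            have : V (2 * t₁ + 2 * t₁) ≤ S :=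
              hVleS _ h4pos (by nlinarith) (by nlinarith)
            exact Submodule.mem_sup_right (this hmem)
          · show ⁅p, w⁆ ∈ W ⊔ S
            rw [hcomm t (2 * t₁) t.2 h2pos hteq p hp w (hWle hw)]
            exact Submodule.zero_mem _
        have hSJ : S ≤ J := by
          refine iSup_le fun u y hy => ?_
          obtain ⟨hu0, hu1, hu2⟩ := u.2
          by_cases hteq : (t : ℝ) = (u : ℝ)
          · by_cases hbot : V (u : ℝ) = ⊥
            · have : y = 0 := by simpa [hbot] using hy
              show ⁅p, y⁆ ∈ W ⊔ S
              rw [this, lie_zero]; exact Submodule.zero_mem _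
            · have hut₁ : t₁ ≤ (u : ℝ) := ht₁min _ hu0 hbot
              have hmem : ⁅p, y⁆ ∈ V ((u : ℝ) + u) :=
                hgrad u u hu0 hu0 p (hteq ▸ hp) y hy
              have : V ((u : ℝ) + u) ≤ S := by
                refine hVleS _ (by positivity) (by nlinarith) ?_
                intro h
                exact hu1 (by nlinarith)
              exact Submodule.mem_sup_right (this hmem)
          · show ⁅p, y⁆ ∈ W ⊔ S
            rw [hcomm t u t.2 hu0 hteq p hp y hy]
            exact Submodule.zero_mem _
        intro z hz
        exact (sup_le hWJ hSJ : W ⊔ S ≤ J) hz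
      exact hKtop Submodule.mem_top y hy
    · -- sup = ⊤
      refine le_antisymm le_top ?_
      rw [← hspan]
      refine iSup_le fun t => ?_
      by_cases h1 : (t : ℝ) = t₁
      · exact le_trans (by rw [h1]) (le_sup_of_le_left le_sup_left)
      by_cases h2 : (t : ℝ) = 2 * t₁
      · have : V (t : ℝ) = B ⊔ W := by rw [h2, hBWsup]
        rw [this]
        exact sup_le (le_sup_of_le_left le_sup_right) (le_sup_of_le_right le_sup_left)
      · exact le_trans (hVleS t t.2 h1 h2) (le_sup_of_le_right le_sup_right)
    · -- inf = ⊥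
      rw [eq_bot_iff]
      intro x hx
      obtain ⟨hx1, hx2⟩ := Submodule.mem_inf.mp hx
      obtain ⟨a, ha, b, hb, hab⟩ := Submodule.mem_sup.mp hx1
      obtain ⟨w, hw, s, hs, hws⟩ := Submodule.mem_sup.mp hx2
      have hSle : ∀ i : {t : ℝ // 0 < t}, ((i : ℝ) = t₁ ∨ (i : ℝ) = 2 * t₁) →
          S ≤ ⨆ j : {t : ℝ // 0 < t}, ⨆ _ : j ≠ i, V j := by
        intro i hi
        refine iSup_le fun u => ?_
        obtain ⟨hu0, hu1, hu2⟩ := u.2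
        have hne : (⟨(u : ℝ), hu0⟩ : {t : ℝ // 0 < t}) ≠ i := by
          intro h
          have heq : (u : ℝ) = (i : ℝ) := congrArg Subtype.val h
          rcases hi with h' | h'
          · exact hu1 (heq.trans h')
          · exact hu2 (heq.trans h')
        exact le_iSup_of_le ⟨u, hu0⟩ (le_iSup_of_le hne le_rfl)
      -- a = 0
      have hi1 : (⟨2 * t₁, h2pos⟩ : {t : ℝ // 0 < t}) ≠ ⟨t₁, ht₁pos⟩ := by
        simp only [ne_eq, Subtype.mk.injEq]
        exact h2ne
      have ha0 : a = 0 := by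
        have hamem : a ∈ ⨆ j : {t : ℝ // 0 < t}, ⨆ _ : j ≠ ⟨t₁, ht₁pos⟩, V j := by
          have : a = (w - b) + s := by
            have : a + b = w + s := by rw [hab, hws]
            linear_combination (norm := module) this
          rw [this]
          refine Submodule.add_mem _ ?_ ?_
          · have hwb : w - b ∈ V (2 * t₁) := Submodule.sub_mem _ (hWle hw) (hBle hb)
            exact Submodule.mem_iSup_of_mem (⟨2 * t₁, h2pos⟩ : {t : ℝ // 0 < t}) (Submodule.mem_iSup_of_mem hi1 hwb)
          · exact hSle ⟨t₁, ht₁pos⟩ (Or.inl rfl) hs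
        exact (Submodule.disjoint_def.mp (hindep ⟨t₁, ht₁pos⟩)) a ha hamem
      -- b = w, so b ∈ B ⊓ W = ⊥
      have hbw : b - w = s := by
        have : a + b = w + s := by rw [hab, hws]
        rw [ha0] at this
        linear_combination (norm := module) this
      have hi2 : ∀ j : {t : ℝ // 0 < t}, True := fun _ => trivial
      have hb0 : b - w = 0 := by
        have hmem1 : b - w ∈ V (2 * t₁) := Submodule.sub_mem _ (hBle hb) (hWle hw)
        have hmem2 : b - w ∈ ⨆ j : {t : ℝ // 0 < t}, ⨆ _ : j ≠ ⟨2 * t₁, h2pos⟩, V j := by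
          rw [hbw]
          exact hSle ⟨2 * t₁, h2pos⟩ (Or.inr rfl) hs
        exact (Submodule.disjoint_def.mp (hindep ⟨2 * t₁, h2pos⟩)) _ hmem1 hmem2
      have hbeq : b = w := by linear_combination (norm := module) hb0
      have : b ∈ B ⊓ W := Submodule.mem_inf.mpr ⟨hb, hbeq ▸ hw⟩
      rw [hBWinf] at this
      have hb' : b = 0 := this
      have hs0 : s = 0 := by rw [← hbw]; exact hb0
      have hw0 : w = 0 := hbeq.symm.trans hb'
      rw [← hws, hw0, hs0, add_zero]
      exact Submodule.zero_mem _
end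

section
/- Let 𝔤 be a finite-dimensional real Lie algebra with a positive grading (V_t)_{t>0}, and suppose there exist 0 < t < s with ⁅V_t,V_s⁆ ≠ {0}. Then there exist X₁ ∈ V_t and X₂ ∈ V_s with ⁅X₁,X₂⁆ ≠ 0 such that, denoting by ĝ the Lie subalgebra of 𝔤 generated by X₁ and X₂, the following hold: (i) ĝ is a graded subalgebra, i.e., ĝ = ⨁_{u>0} (V_u ∩ ĝ); (ii) there exists a Lie algebra homomorphism φ from ĝ to the Lie algebra of 3×3 real matrices (with commutator bracket) such that φ(X₁) = E₁₂, φ(X₂) = E₂₃ (where E_{ij} is the matrix unit), the range of φ is exactly the space of strictly upper-triangular 3×3 matrices, and φ maps V_u ∩ ĝ into span{E₁₂} if u = t, into span{E₂₃} if u = s, into span{E₁₃} if u = t+s, and to 0 if u ∉ {t, s, t+s}. -/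
/-- The matrix unit `E i j` in the 3×3 real matrices. -/
def E (i j : Fin 3) : Matrix (Fin 3) (Fin 3) ℝ := Matrix.single i j 1

attribute [local instance 100] LieRing.ofAssociativeRing

lemma lie_E_combo (a b c a' b' c' : ℝ) :
    ⁅a • E 0 1 + b • E 1 2 + c • E 0 2, a' • E 0 1 + b' • E 1 2 + c' • E 0 2⁆
      = (a * b' - b * a') • E 0 2 := by
  ext i j
  fin_cases i <;> fin_cases j <;>
    (simp [E, Ring.lie_def, Matrix.mul_apply, Matrix.single, Fin.sum_univ_three,
      Matrix.add_apply, Matrix.smul_apply]; try ring)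

/-- Let `𝔤` be a finite-dimensional real Lie algebra with a positive grading `(V t)_{t>0}`
and suppose `⁅V t, V s⁆ ≠ 0` for some `0 < t < s`. Then there are `X₁ ∈ V t`, `X₂ ∈ V s`
with `⁅X₁,X₂⁆ ≠ 0` such that the Lie subalgebra `gHat` generated by `X₁, X₂` is graded, and
there is a surjective graded Lie algebra morphism from `gHat` onto the strictly
upper-triangular 3×3 matrices (the first Heisenberg algebra with its `t`-power of the
non-standard grading of exponent `s/t`), sending `X₁ ↦ E₁₂` and `X₂ ↦ E₂₃`. -/
theorem statement10 {L : Type*} [LieRing L] [LieAlgebra ℝ L] [Module.Finite ℝ L]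
    (V : ℝ → Submodule ℝ L)
    (hfin : {t : ℝ | 0 < t ∧ V t ≠ ⊥}.Finite)
    (hspan : (⨆ t : {t : ℝ // 0 < t}, V t) = ⊤)
    (hindep : iSupIndep (fun t : {t : ℝ // 0 < t} => V t))
    (hgrad : ∀ s t : ℝ, 0 < s → 0 < t → ∀ x ∈ V s, ∀ y ∈ V t, ⁅x, y⁆ ∈ V (s + t))
    (t s : ℝ) (ht : 0 < t) (hts : t < s)
    (hnc : ∃ x ∈ V t, ∃ y ∈ V s, ⁅x, y⁆ ≠ 0) :
    ∃ X₁ X₂ : L, X₁ ∈ V t ∧ X₂ ∈ V s ∧ ⁅X₁, X₂⁆ ≠ 0 ∧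
      ∀ gHat : LieSubalgebra ℝ L, gHat = LieSubalgebra.lieSpan ℝ L {X₁, X₂} →
        (gHat.toSubmodule = ⨆ u : {u : ℝ // 0 < u}, (V u.1 ⊓ gHat.toSubmodule)) ∧
        ∃ φ : gHat →ₗ⁅ℝ⁆ Matrix (Fin 3) (Fin 3) ℝ,
          (∀ x : gHat, (x : L) = X₁ → φ x = E 0 1) ∧
          (∀ x : gHat, (x : L) = X₂ → φ x = E 1 2) ∧
          (∀ M : Matrix (Fin 3) (Fin 3) ℝ,
            (∃ x : gHat, φ x = M) ↔
              M ∈ Submodule.span ℝ ({E 0 1, E 1 2, E 0 2} :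
                Set (Matrix (Fin 3) (Fin 3) ℝ))) ∧
          (∀ x : gHat, (x : L) ∈ V t → φ x ∈ Submodule.span ℝ ({E 0 1} :
            Set (Matrix (Fin 3) (Fin 3) ℝ))) ∧
          (∀ x : gHat, (x : L) ∈ V s → φ x ∈ Submodule.span ℝ ({E 1 2} :
            Set (Matrix (Fin 3) (Fin 3) ℝ))) ∧
          (∀ x : gHat, (x : L) ∈ V (t + s) → φ x ∈ Submodule.span ℝ ({E 0 2} :
            Set (Matrix (Fin 3) (Fin 3) ℝ))) ∧
          (∀ u : ℝ, 0 < u → u ≠ t → u ≠ s → u ≠ t + s →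
            ∀ x : gHat, (x : L) ∈ V u → φ x = 0) := by
  obtain ⟨X₁, hX₁, X₂, hX₂, hne⟩ := hnc
  have hs : 0 < s := ht.trans hts
  have hts0 : 0 < t + s := by linarith
  set X₃ := ⁅X₁, X₂⁆ with hX₃def
  have hX₃ : X₃ ∈ V (t + s) := hgrad t s ht hs X₁ hX₁ X₂ hX₂
  have hX₁ne : X₁ ≠ 0 := by rintro rfl; apply hne; simp [hX₃def]
  have hX₂ne : X₂ ≠ 0 := by rintro rfl; apply hne; simp [hX₃def]
  -- the "complementary degrees" submodules
  set Z : ℝ → Submodule ℝ L := fun u => ⨆ w : {w : ℝ // 0 < w ∧ w ≠ u}, V w.1 with hZdef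
  have hVZ : ∀ u w : ℝ, 0 < w → w ≠ u → V w ≤ Z u := fun u w hw hwu =>
    le_iSup (fun w : {w : ℝ // 0 < w ∧ w ≠ u} => V w.1) ⟨w, hw, hwu⟩
  have hdisj : ∀ u : ℝ, 0 < u → Disjoint (V u) (Z u) := by
    intro u hu
    refine (hindep ⟨u, hu⟩).mono_right ?_
    refine iSup_le fun w => ?_
    exact le_iSup₂_of_le ⟨w.1, w.2.1⟩ (fun h => w.2.2 (congrArg Subtype.val h)) le_rfl
  have hcompl : ∀ u : ℝ, 0 < u → IsCompl (V u) (Z u) := by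
    intro u hu
    refine ⟨hdisj u hu, codisjoint_iff.2 (eq_top_iff.2 ?_)⟩
    rw [← hspan]
    refine iSup_le fun w => ?_
    by_cases h : w.1 = u
    · exact h ▸ le_sup_left
    · exact le_sup_of_le_right (hVZ u w.1 w.2 h)
  -- functionals
  have hfun : ∀ (u : ℝ) (hu : 0 < u) (X : L), X ∈ V u → X ≠ 0 →
      ∃ f : L →ₗ[ℝ] ℝ, f X = 1 ∧ ∀ x ∈ Z u, f x = 0 := by
    intro u hu X hXu hXne
    obtain ⟨C, hC⟩ := Submodule.exists_isCompl (Submodule.span ℝ {X})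
    refine ⟨(LinearEquiv.coord ℝ L X hXne).toLinearMap ∘ₗ
      ((Submodule.span ℝ {X}).linearProjOfIsCompl C hC ∘ₗ ((V u).subtype ∘ₗ
      (V u).linearProjOfIsCompl (Z u) (hcompl u hu))), ?_, ?_⟩
    · have h1 : (V u).linearProjOfIsCompl (Z u) (hcompl u hu) X = ⟨X, hXu⟩ :=
        Submodule.linearProjOfIsCompl_apply_left (hcompl u hu) ⟨X, hXu⟩
      have h2 : (Submodule.span ℝ {X}).linearProjOfIsCompl C hC X
          = ⟨X, Submodule.mem_span_singleton_self X⟩ :=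
        Submodule.linearProjOfIsCompl_apply_left hC ⟨X, Submodule.mem_span_singleton_self X⟩
      simp [h1, h2, LinearEquiv.coord_self]
    · intro x hx
      have h1 : (V u).linearProjOfIsCompl (Z u) (hcompl u hu) x = 0 :=
        Submodule.linearProjOfIsCompl_apply_right (hcompl u hu) ⟨x, hx⟩
      simp [h1]
  obtain ⟨f₁, hf₁X₁, hf₁Z⟩ := hfun t ht X₁ hX₁ hX₁ne
  obtain ⟨f₂, hf₂X₂, hf₂Z⟩ := hfun s hs X₂ hX₂ hX₂ne
  obtain ⟨f₃, hf₃X₃, hf₃Z⟩ := hfun (t + s) hts0 X₃ hX₃ hne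
  have hf₁V : ∀ w : ℝ, 0 < w → w ≠ t → ∀ x ∈ V w, f₁ x = 0 :=
    fun w hw hwt x hx => hf₁Z x (hVZ t w hw hwt hx)
  have hf₂V : ∀ w : ℝ, 0 < w → w ≠ s → ∀ x ∈ V w, f₂ x = 0 :=
    fun w hw hws x hx => hf₂Z x (hVZ s w hw hws hx)
  have hf₃V : ∀ w : ℝ, 0 < w → w ≠ t + s → ∀ x ∈ V w, f₃ x = 0 :=
    fun w hw hwts x hx => hf₃Z x (hVZ (t + s) w hw hwts hx)
  have hf₁X₂ : f₁ X₂ = 0 := hf₁V s hs (ne_of_gt hts) X₂ hX₂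
  have hf₁X₃ : f₁ X₃ = 0 := hf₁V (t + s) hts0 (by intro h; linarith) X₃ hX₃
  have hf₂X₁ : f₂ X₁ = 0 := hf₂V t ht (ne_of_lt hts) X₁ hX₁
  have hf₂X₃ : f₂ X₃ = 0 := hf₂V (t + s) hts0 (by intro h; linarith) X₃ hX₃
  have hf₃X₁ : f₃ X₁ = 0 := hf₃V t ht (by intro h; linarith) X₁ hX₁
  have hf₃X₂ : f₃ X₂ = 0 := hf₃V s hs (by intro h; linarith) X₂ hX₂
  -- the candidate linear map on L
  set φ₀ : L →ₗ[ℝ] Matrix (Fin 3) (Fin 3) ℝ :=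
    f₁.smulRight (E 0 1) + f₂.smulRight (E 1 2) + f₃.smulRight (E 0 2) with hφ₀def
  have hφ₀app : ∀ x : L, φ₀ x = f₁ x • E 0 1 + f₂ x • E 1 2 + f₃ x • E 0 2 := by
    intro x; rw [hφ₀def]; simp
  have hφ₀X₁ : φ₀ X₁ = E 0 1 := by rw [hφ₀app]; simp [hf₁X₁, hf₂X₁, hf₃X₁]
  have hφ₀X₂ : φ₀ X₂ = E 1 2 := by rw [hφ₀app]; simp [hf₁X₂, hf₂X₂, hf₃X₂]
  have hφ₀X₃ : φ₀ X₃ = E 0 2 := by rw [hφ₀app]; simp [hf₁X₃, hf₂X₃, hf₃X₃]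
  have hφ₀V0 : ∀ w : ℝ, 0 < w → w ≠ t → w ≠ s → w ≠ t + s → ∀ x ∈ V w, φ₀ x = 0 := by
    intro w hw h1 h2 h3 x hx
    rw [hφ₀app, hf₁V w hw h1 x hx, hf₂V w hw h2 x hx, hf₃V w hw h3 x hx]
    simp
  -- high-degree part
  set U : Submodule ℝ L := ⨆ w : {w : ℝ // t + s < w}, V w.1 with hUdef
  have hVU : ∀ w : ℝ, t + s < w → V w ≤ U := fun w hw =>
    le_iSup (fun w : {w : ℝ // t + s < w} => V w.1) ⟨w, hw⟩
  have hUZ : ∀ u : ℝ, u ≤ t + s → U ≤ Z u :=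
    fun u hu => iSup_le fun w => hVZ u w.1 (lt_trans hts0 w.2) (by have := w.2; intro h; linarith)
  have hlieU : ∀ x : L, ∀ y ∈ U, ⁅x, y⁆ ∈ U := by
    intro x y hy
    have hx : x ∈ (⨆ u : {u : ℝ // 0 < u}, V u.1) := by rw [hspan]; trivial
    refine Submodule.iSup_induction (motive := fun x => ⁅x, y⁆ ∈ U) _ hx (fun i xi hxi => ?_)
      (by show ⁅(0 : L), y⁆ ∈ U; simp)
      (fun a b ha hb => by show ⁅a + b, y⁆ ∈ U; rw [add_lie]; exact Submodule.add_mem _ ha hb)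
    refine Submodule.iSup_induction (motive := fun y => ⁅xi, y⁆ ∈ U) _ hy (fun j yj hyj => ?_)
      (by show ⁅xi, (0 : L)⁆ ∈ U; simp)
      (fun a b ha hb => by show ⁅xi, a + b⁆ ∈ U; rw [lie_add]; exact Submodule.add_mem _ ha hb)
    exact hVU (i.1 + j.1) (by have := i.2; have := j.2; linarith)
      (hgrad i.1 j.1 i.2 (lt_trans hts0 j.2) xi hxi yj hyj)
  -- the enveloping subalgebra W
  set W : Submodule ℝ L := Submodule.span ℝ {X₁, X₂, X₃} ⊔ U with hWdef
  have hUW : U ≤ W := le_sup_right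
  have hX₁W : X₁ ∈ W := Submodule.mem_sup_left (Submodule.subset_span (by simp))
  have hX₂W : X₂ ∈ W := Submodule.mem_sup_left (Submodule.subset_span (by simp))
  have hX₃W : X₃ ∈ W := Submodule.mem_sup_left (Submodule.subset_span (by simp))
  have hWlie : ∀ x ∈ W, ∀ y ∈ W, ⁅x, y⁆ ∈ W := by
    have hWeq : W = Submodule.span ℝ ({X₁, X₂, X₃} ∪ (U : Set L)) := by
      rw [Submodule.span_union, Submodule.span_eq]
    have base : ∀ g ∈ ({X₁, X₂, X₃} ∪ (U : Set L) : Set L),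
        ∀ g' ∈ ({X₁, X₂, X₃} ∪ (U : Set L) : Set L), ⁅g, g'⁆ ∈ W := by
      have h13 : ⁅X₁, X₃⁆ ∈ W := hUW (hVU (t + (t + s)) (by linarith)
        (hgrad t (t + s) ht hts0 X₁ hX₁ X₃ hX₃))
      have h23 : ⁅X₂, X₃⁆ ∈ W := hUW (hVU (s + (t + s)) (by linarith)
        (hgrad s (t + s) hs hts0 X₂ hX₂ X₃ hX₃))
      rintro g (hg | hg) g' (hg' | hg')
      · simp only [Set.mem_insert_iff, Set.mem_singleton_iff] at hg hg'
        rcases hg with h | h | h <;> rcases hg' with h' | h' | h' <;> rw [h, h']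
        · simp
        · rw [← hX₃def]; exact hX₃W
        · exact h13
        · rw [← lie_skew, ← hX₃def]; exact Submodule.neg_mem _ hX₃W
        · simp
        · exact h23
        · rw [← lie_skew]; exact Submodule.neg_mem _ h13
        · rw [← lie_skew]; exact Submodule.neg_mem _ h23
        · simp
      · exact hUW (hlieU g g' hg')
      · rw [← lie_skew]; exact Submodule.neg_mem _ (hUW (hlieU g' g hg))
      · exact hUW (hlieU g g' hg')
    intro x hx y hy
    rw [hWeq] at hx hy
    induction hx using Submodule.span_induction with
    | mem g hg =>
      induction hy using Submodule.span_induction with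
      | mem g' hg' => exact base g hg g' hg'
      | zero => simp
      | add y z _ _ hy hz => rw [lie_add]; exact Submodule.add_mem _ hy hz
      | smul a y _ hy => rw [lie_smul]; exact Submodule.smul_mem _ a hy
    | zero => simp
    | add x z _ _ hx hz => rw [add_lie]; exact Submodule.add_mem _ hx hz
    | smul a x _ hx => rw [smul_lie]; exact Submodule.smul_mem _ a hx
  -- classification of homogeneous elements of W
  have hsplit : ∀ (u : ℝ), 0 < u → ∀ (P : Submodule ℝ L), P ≤ V u → W ≤ P ⊔ Z u →
      ∀ x ∈ V u, x ∈ W → x ∈ P := by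
    intro u hu P hPV hWP x hxV hxW
    obtain ⟨y, hy, z, hz, hyz⟩ := Submodule.mem_sup.1 (hWP hxW)
    have hzV : z ∈ V u := by
      have hzxy : z = x - y := by rw [← hyz]; abel
      rw [hzxy]; exact Submodule.sub_mem _ hxV (hPV hy)
    have hz0 : z = 0 := Submodule.disjoint_def.1 (hdisj u hu) z hzV hz
    rw [← hyz, hz0, add_zero]; exact hy
  have hclass_t : ∀ x ∈ V t, x ∈ W → x ∈ Submodule.span ℝ {X₁} := by
    refine hsplit t ht _ ((Submodule.span_le).2 (by simpa using hX₁)) (sup_le ?_ ?_)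
    · refine (Submodule.span_le).2 ?_
      rintro z hz
      simp only [Set.mem_insert_iff, Set.mem_singleton_iff] at hz
      rcases hz with h | h | h <;> rw [h]
      · exact Submodule.mem_sup_left (Submodule.mem_span_singleton_self _)
      · exact Submodule.mem_sup_right (hVZ t s hs (ne_of_gt hts) hX₂)
      · exact Submodule.mem_sup_right (hVZ t (t + s) hts0 (by intro h; linarith) hX₃)
    · exact le_sup_of_le_right (hUZ t (by linarith))
  have hclass_s : ∀ x ∈ V s, x ∈ W → x ∈ Submodule.span ℝ {X₂} := by
    refine hsplit s hs _ ((Submodule.span_le).2 (by simpa using hX₂)) (sup_le ?_ ?_)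
    · refine (Submodule.span_le).2 ?_
      rintro z hz
      simp only [Set.mem_insert_iff, Set.mem_singleton_iff] at hz
      rcases hz with h | h | h <;> rw [h]
      · exact Submodule.mem_sup_right (hVZ s t ht (ne_of_lt hts) hX₁)
      · exact Submodule.mem_sup_left (Submodule.mem_span_singleton_self _)
      · exact Submodule.mem_sup_right (hVZ s (t + s) hts0 (by intro h; linarith) hX₃)
    · exact le_sup_of_le_right (hUZ s (by linarith))
  have hclass_ts : ∀ x ∈ V (t + s), x ∈ W → x ∈ Submodule.span ℝ {X₃} := by
    refine hsplit (t + s) hts0 _ ((Submodule.span_le).2 (by simpa using hX₃)) (sup_le ?_ ?_)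
    · refine (Submodule.span_le).2 ?_
      rintro z hz
      simp only [Set.mem_insert_iff, Set.mem_singleton_iff] at hz
      rcases hz with h | h | h <;> rw [h]
      · exact Submodule.mem_sup_right (hVZ (t + s) t ht (by intro h; linarith) hX₁)
      · exact Submodule.mem_sup_right (hVZ (t + s) s hs (by intro h; linarith) hX₂)
      · exact Submodule.mem_sup_left (Submodule.mem_span_singleton_self _)
    · exact le_sup_of_le_right (hUZ (t + s) le_rfl)
  have hclass_o : ∀ u : ℝ, 0 < u → u ≠ t → u ≠ s → u ≠ t + s → u < t + s →
      ∀ x ∈ V u, x ∈ W → x = 0 := by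
    intro u hu h1 h2 h3 h4 x hx hxW
    have hle : W ≤ (⊥ : Submodule ℝ L) ⊔ Z u := by
      refine sup_le ?_ ?_
      · refine (Submodule.span_le).2 ?_
        rintro z hz
        simp only [Set.mem_insert_iff, Set.mem_singleton_iff] at hz
        rcases hz with h | h | h <;> rw [h]
        · exact Submodule.mem_sup_right (hVZ u t ht (fun h => h1 h.symm) hX₁)
        · exact Submodule.mem_sup_right (hVZ u s hs (fun h => h2 h.symm) hX₂)
        · exact Submodule.mem_sup_right (hVZ u (t + s) hts0 (fun h => h3 h.symm) hX₃)
      · exact le_sup_of_le_right (hUZ u (le_of_lt h4))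
    simpa using hsplit u hu ⊥ bot_le hle x hx hxW
  refine ⟨X₁, X₂, hX₁, hX₂, hne, ?_⟩
  intro gHat hgH
  subst hgH
  set G := LieSubalgebra.lieSpan ℝ L {X₁, X₂} with hGdef
  have hX₁G : X₁ ∈ G := LieSubalgebra.subset_lieSpan (Set.mem_insert _ _)
  have hX₂G : X₂ ∈ G := LieSubalgebra.subset_lieSpan (Set.mem_insert_of_mem _ rfl)
  have hX₃G : X₃ ∈ G := G.lie_mem hX₁G hX₂G
  -- G is contained in W
  have hGW : ∀ x ∈ G, x ∈ W := by
    have hle : G ≤ ({ toSubmodule := W, lie_mem' := fun {x y} hx hy => hWlie x hx y hy } :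
        LieSubalgebra ℝ L) := by
      rw [hGdef]
      refine LieSubalgebra.lieSpan_le.2 ?_
      rintro z hz
      simp only [Set.mem_insert_iff, Set.mem_singleton_iff] at hz
      rcases hz with h | h <;> rw [h]
      · exact hX₁W
      · exact hX₂W
    exact fun x hx => hle hx
  -- the grading of G
  set R : Submodule ℝ L := ⨆ u : {u : ℝ // 0 < u}, (V u.1 ⊓ G.toSubmodule) with hRdef
  have hmemR : ∀ u : ℝ, 0 < u → ∀ x ∈ V u, x ∈ G → x ∈ R := by
    intro u hu x hx hxG
    exact le_iSup (fun u : {u : ℝ // 0 < u} => V u.1 ⊓ G.toSubmodule) ⟨u, hu⟩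
      (Submodule.mem_inf.2 ⟨hx, hxG⟩)
  have hRlie : ∀ x ∈ R, ∀ y ∈ R, ⁅x, y⁆ ∈ R := by
    intro x hx y hy
    refine Submodule.iSup_induction (motive := fun x => ⁅x, y⁆ ∈ R) _ hx (fun i xi hxi => ?_)
      (by show ⁅(0 : L), y⁆ ∈ R; simp)
      (fun a b ha hb => by show ⁅a + b, y⁆ ∈ R; rw [add_lie]; exact Submodule.add_mem _ ha hb)
    refine Submodule.iSup_induction (motive := fun y => ⁅xi, y⁆ ∈ R) _ hy (fun j yj hyj => ?_)
      (by show ⁅xi, (0 : L)⁆ ∈ R; simp)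
      (fun a b ha hb => by show ⁅xi, a + b⁆ ∈ R; rw [lie_add]; exact Submodule.add_mem _ ha hb)
    obtain ⟨hxi1, hxi2⟩ := Submodule.mem_inf.1 hxi
    obtain ⟨hyj1, hyj2⟩ := Submodule.mem_inf.1 hyj
    exact hmemR (i.1 + j.1) (add_pos i.2 j.2) _ (hgrad i.1 j.1 i.2 j.2 xi hxi1 yj hyj1)
      (G.lie_mem hxi2 hyj2)
  have hgraded : G.toSubmodule = R := by
    refine le_antisymm ?_ (iSup_le fun u => inf_le_right)
    have hle : G ≤ ({ toSubmodule := R, lie_mem' := fun {x y} hx hy => hRlie x hx y hy } :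
        LieSubalgebra ℝ L) := by
      rw [hGdef]
      refine LieSubalgebra.lieSpan_le.2 ?_
      rintro z hz
      simp only [Set.mem_insert_iff, Set.mem_singleton_iff] at hz
      rcases hz with h | h <;> rw [h]
      · exact hmemR t ht X₁ hX₁ hX₁G
      · exact hmemR s hs X₂ hX₂ hX₂G
    exact fun x hx => hle hx
  -- the case classification of degrees
  have hcases : ∀ w : ℝ, 0 < w → t = w ∨ s = w ∨ t + s = w ∨
      ((w ≠ t ∧ w ≠ s ∧ w ≠ t + s) ∧ w < t + s) ∨ t + s < w := by
    intro w hw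
    by_cases h1 : w = t
    · exact Or.inl h1.symm
    by_cases h2 : w = s
    · exact Or.inr (Or.inl h2.symm)
    by_cases h3 : w = t + s
    · exact Or.inr (Or.inr (Or.inl h3.symm))
    rcases lt_or_gt_of_ne h3 with h | h
    · exact Or.inr (Or.inr (Or.inr (Or.inl ⟨⟨h1, h2, h3⟩, h⟩)))
    · exact Or.inr (Or.inr (Or.inr (Or.inr h)))
  -- the homogeneous bracket compatibility
  have hhom : ∀ u : ℝ, 0 < u → ∀ x ∈ V u, x ∈ G → ∀ v : ℝ, 0 < v → ∀ y ∈ V v, y ∈ G →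
      φ₀ ⁅x, y⁆ = ⁅φ₀ x, φ₀ y⁆ := by
    intro u hu x hx hxG v hv y hy hyG
    have hz : ⁅x, y⁆ ∈ V (u + v) := hgrad u v hu hv x hx y hy
    have hxW : x ∈ W := hGW x hxG
    have hyW : y ∈ W := hGW y hyG
    rw [hφ₀app x, hφ₀app y, lie_E_combo]
    rcases hcases u hu with rfl | rfl | rfl | ⟨⟨hu1, hu2, hu3⟩, hu4⟩ | hugt
    · -- u = t
      rcases hcases v hv with rfl | rfl | rfl | ⟨⟨hv1, hv2, hv3⟩, hv4⟩ | hvgt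
      · -- (t, t)
        obtain ⟨a, rfl⟩ := Submodule.mem_span_singleton.1 (hclass_t x hx hxW)
        obtain ⟨b, rfl⟩ := Submodule.mem_span_singleton.1 (hclass_t y hy hyW)
        simp [smul_lie, lie_smul, map_smul, hf₂X₁, smul_eq_mul]
      · -- (t, s) : the main case
        obtain ⟨a, rfl⟩ := Submodule.mem_span_singleton.1 (hclass_t x hx hxW)
        obtain ⟨b, rfl⟩ := Submodule.mem_span_singleton.1 (hclass_s y hy hyW)
        rw [smul_lie, lie_smul, ← hX₃def, map_smul, map_smul, hφ₀X₃]
        simp [map_smul, hf₁X₁, hf₂X₂, hf₂X₁, hf₁X₂, smul_smul, smul_eq_mul]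
      · -- (t, t+s)
        rw [hφ₀app]
        rw [hf₁V (t + (t + s)) (by linarith) (by intro h; linarith) _ hz,
          hf₂V (t + (t + s)) (by linarith) (by intro h; linarith) _ hz,
          hf₃V (t + (t + s)) (by linarith) (by intro h; linarith) _ hz,
          hf₂V (t + s) hts0 (by intro h; linarith) y hy,
          hf₂V t ht (ne_of_lt hts) x hx]
        simp
      · -- (t, other small)
        have hy0 : y = 0 := hclass_o v hv hv1 hv2 hv3 hv4 y hy hyW
        subst hy0
        simp
      · -- (t, large)
        rw [hφ₀app]
        rw [hf₁V (t + v) (by linarith) (by intro h; linarith) _ hz,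
          hf₂V (t + v) (by linarith) (by intro h; linarith) _ hz,
          hf₃V (t + v) (by linarith) (by intro h; linarith) _ hz,
          hf₁V v hv (by intro h; linarith) y hy,
          hf₂V v hv (by intro h; linarith) y hy]
        simp
    · -- u = s
      rcases hcases v hv with rfl | rfl | rfl | ⟨⟨hv1, hv2, hv3⟩, hv4⟩ | hvgt
      · -- (s, t)
        obtain ⟨a, rfl⟩ := Submodule.mem_span_singleton.1 (hclass_s x hx hxW)
        obtain ⟨b, rfl⟩ := Submodule.mem_span_singleton.1 (hclass_t y hy hyW)
        have h21 : ⁅X₂, X₁⁆ = -X₃ := by rw [hX₃def, ← lie_skew]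
        rw [smul_lie, lie_smul, h21, map_smul, map_smul, map_neg, hφ₀X₃]
        simp [map_smul, hf₁X₁, hf₂X₂, hf₂X₁, hf₁X₂, smul_smul, smul_eq_mul]
      · -- (s, s)
        obtain ⟨a, rfl⟩ := Submodule.mem_span_singleton.1 (hclass_s x hx hxW)
        obtain ⟨b, rfl⟩ := Submodule.mem_span_singleton.1 (hclass_s y hy hyW)
        simp [smul_lie, lie_smul, map_smul, hf₁X₂, smul_eq_mul]
      · -- (s, t+s)
        rw [hφ₀app]
        rw [hf₁V (s + (t + s)) (by linarith) (by intro h; linarith) _ hz,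
          hf₂V (s + (t + s)) (by linarith) (by intro h; linarith) _ hz,
          hf₃V (s + (t + s)) (by linarith) (by intro h; linarith) _ hz,
          hf₁V s hs (by intro h; linarith) x hx,
          hf₁V (t + s) hts0 (by intro h; linarith) y hy]
        simp
      · have hy0 : y = 0 := hclass_o v hv hv1 hv2 hv3 hv4 y hy hyW
        subst hy0; simp
      · rw [hφ₀app]
        rw [hf₁V (s + v) (by linarith) (by intro h; linarith) _ hz,
          hf₂V (s + v) (by linarith) (by intro h; linarith) _ hz,
          hf₃V (s + v) (by linarith) (by intro h; linarith) _ hz,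
          hf₁V v hv (by intro h; linarith) y hy,
          hf₂V v hv (by intro h; linarith) y hy]
        simp
    · -- u = t + s
      rcases hcases v hv with rfl | rfl | rfl | ⟨⟨hv1, hv2, hv3⟩, hv4⟩ | hvgt
      · rw [hφ₀app]
        rw [hf₁V ((t + s) + t) (by linarith) (by intro h; linarith) _ hz,
          hf₂V ((t + s) + t) (by linarith) (by intro h; linarith) _ hz,
          hf₃V ((t + s) + t) (by linarith) (by intro h; linarith) _ hz,
          hf₁V (t + s) hts0 (by intro h; linarith) x hx,
          hf₂V (t + s) hts0 (by intro h; linarith) x hx]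
        simp
      · rw [hφ₀app]
        rw [hf₁V ((t + s) + s) (by linarith) (by intro h; linarith) _ hz,
          hf₂V ((t + s) + s) (by linarith) (by intro h; linarith) _ hz,
          hf₃V ((t + s) + s) (by linarith) (by intro h; linarith) _ hz,
          hf₁V (t + s) hts0 (by intro h; linarith) x hx,
          hf₂V (t + s) hts0 (by intro h; linarith) x hx]
        simp
      · obtain ⟨a, rfl⟩ := Submodule.mem_span_singleton.1 (hclass_ts x hx hxW)
        obtain ⟨b, rfl⟩ := Submodule.mem_span_singleton.1 (hclass_ts y hy hyW)
        simp [smul_lie, lie_smul, map_smul, hf₁X₃, hf₂X₃, smul_eq_mul]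
      · have hy0 : y = 0 := hclass_o v hv hv1 hv2 hv3 hv4 y hy hyW
        subst hy0; simp
      · rw [hφ₀app]
        rw [hf₁V ((t + s) + v) (by linarith) (by intro h; linarith) _ hz,
          hf₂V ((t + s) + v) (by linarith) (by intro h; linarith) _ hz,
          hf₃V ((t + s) + v) (by linarith) (by intro h; linarith) _ hz,
          hf₁V (t + s) hts0 (by intro h; linarith) x hx,
          hf₂V (t + s) hts0 (by intro h; linarith) x hx]
        simp
    · -- u other small
      have hx0 : x = 0 := hclass_o u hu hu1 hu2 hu3 hu4 x hx hxW
      subst hx0; simp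
    · -- u large
      rw [hφ₀app]
      rw [hf₁V (u + v) (by linarith) (by intro h; linarith) _ hz,
        hf₂V (u + v) (by linarith) (by intro h; linarith) _ hz,
        hf₃V (u + v) (by linarith) (by intro h; linarith) _ hz,
        hf₁V u hu (by intro h; linarith) x hx,
        hf₂V u hu (by intro h; linarith) x hx]
      simp
  -- bracket compatibility on all of G
  have hbr : ∀ x ∈ G, ∀ y ∈ G, φ₀ ⁅x, y⁆ = ⁅φ₀ x, φ₀ y⁆ := by
    intro x hx y hy
    have hx' : x ∈ R := by rw [← hgraded]; exact hx
    have hy' : y ∈ R := by rw [← hgraded]; exact hy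
    refine Submodule.iSup_induction
      (motive := fun x => ∀ y ∈ R, φ₀ ⁅x, y⁆ = ⁅φ₀ x, φ₀ y⁆) _ hx' ?_ ?_ ?_ y hy'
    · intro i xi hxi y hy
      obtain ⟨hxi1, hxi2⟩ := Submodule.mem_inf.1 hxi
      refine Submodule.iSup_induction
        (motive := fun y => φ₀ ⁅xi, y⁆ = ⁅φ₀ xi, φ₀ y⁆) _ hy ?_ ?_ ?_
      · intro j yj hyj
        obtain ⟨hyj1, hyj2⟩ := Submodule.mem_inf.1 hyj
        exact hhom i.1 i.2 xi hxi1 hxi2 j.1 j.2 yj hyj1 hyj2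
      · show φ₀ ⁅xi, (0 : L)⁆ = ⁅φ₀ xi, φ₀ 0⁆; simp
      · intro a b ha hb
        show φ₀ ⁅xi, a + b⁆ = ⁅φ₀ xi, φ₀ (a + b)⁆
        rw [lie_add, map_add, ha, hb, map_add, lie_add]
    · intro y hy
      show φ₀ ⁅(0 : L), y⁆ = ⁅φ₀ 0, φ₀ y⁆
      simp
    · intro a b ha hb y hy
      show φ₀ ⁅a + b, y⁆ = ⁅φ₀ (a + b), φ₀ y⁆
      rw [add_lie, map_add, ha y hy, hb y hy, map_add, add_lie]
  -- the Lie algebra morphism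
  refine ⟨hgraded, ⟨⟨φ₀ ∘ₗ (LieSubalgebra.toSubmodule G).subtype, ?_⟩,
    ?_, ?_, ?_, ?_, ?_, ?_, ?_⟩⟩
  · intro x y
    show φ₀ ((⁅x, y⁆ : G) : L) = ⁅φ₀ (x : L), φ₀ (y : L)⁆
    rw [LieSubalgebra.coe_bracket]
    exact hbr x.1 x.2 y.1 y.2
  · intro x hx
    show φ₀ (x : L) = E 0 1
    rw [hx, hφ₀X₁]
  · intro x hx
    show φ₀ (x : L) = E 1 2
    rw [hx, hφ₀X₂]
  · intro M
    constructor
    · rintro ⟨x, rfl⟩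
      show φ₀ (x : L) ∈ _
      rw [hφ₀app]
      refine Submodule.add_mem _ (Submodule.add_mem _ ?_ ?_) ?_ <;>
        exact Submodule.smul_mem _ _ (Submodule.subset_span (by simp))
    · intro hM
      have hr : Submodule.span ℝ ({E 0 1, E 1 2, E 0 2} : Set (Matrix (Fin 3) (Fin 3) ℝ)) ≤
          LinearMap.range (φ₀ ∘ₗ (LieSubalgebra.toSubmodule G).subtype) := by
        refine Submodule.span_le.2 ?_
        rintro N hN
        simp only [Set.mem_insert_iff, Set.mem_singleton_iff] at hN
        rcases hN with h | h | h <;> rw [h]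
        · exact ⟨⟨X₁, hX₁G⟩, hφ₀X₁⟩
        · exact ⟨⟨X₂, hX₂G⟩, hφ₀X₂⟩
        · exact ⟨⟨X₃, hX₃G⟩, hφ₀X₃⟩
      obtain ⟨x, hx⟩ := hr hM
      exact ⟨x, hx⟩
  · intro x hx
    show φ₀ (x : L) ∈ _
    obtain ⟨a, ha⟩ := Submodule.mem_span_singleton.1 (hclass_t (x : L) hx (hGW _ x.2))
    rw [← ha, map_smul, hφ₀X₁]
    exact Submodule.smul_mem _ a (Submodule.mem_span_singleton_self _)
  · intro x hx
    show φ₀ (x : L) ∈ _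
    obtain ⟨a, ha⟩ := Submodule.mem_span_singleton.1 (hclass_s (x : L) hx (hGW _ x.2))
    rw [← ha, map_smul, hφ₀X₂]
    exact Submodule.smul_mem _ a (Submodule.mem_span_singleton_self _)
  · intro x hx
    show φ₀ (x : L) ∈ _
    obtain ⟨a, ha⟩ := Submodule.mem_span_singleton.1 (hclass_ts (x : L) hx (hGW _ x.2))
    rw [← ha, map_smul, hφ₀X₃]
    exact Submodule.smul_mem _ a (Submodule.mem_span_singleton_self _)
  · intro u hu h1 h2 h3 x hx
    show φ₀ (x : L) = 0
    exact hφ₀V0 u hu h1 h2 h3 (x : L) hx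
end
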